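/- arXiv:1605.08538 — 7 statements merged into one kernel-verified Lean document; each statement's English description precedes it below -/
import Mathlib

section
/- Let C ⊆ ℝ^n be a closed convex set and φ : ℝ^n → ℝ^d be an affine map such that P := φ(C) is a polytope. Then there exists an affine subspace L of ℝ^n such that C ∩ L is bounded and φ(C ∩ L) = P. -/
open Metric Set

noncomputable section

/-- A polytope: convex hull of a finite set. -/
def IsPolytope {d : ℕ} (P : Set (EuclideanSpace ℝ (Fin d))) : Prop :=
  ∃ V : Finset (EuclideanSpace ℝ (Fin d)), P = convexHull ℝ (V : Set (EuclideanSpace ℝ (Fin d)))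

/-- `P` has an extended formulation with `l` LMIs of size `m`. -/
def HasSdpExtBlocks {d : ℕ} (P : Set (EuclideanSpace ℝ (Fin d))) (l m : ℕ) : Prop :=
  ∃ (n : ℕ) (φ : EuclideanSpace ℝ (Fin n) →ᵃ[ℝ] EuclideanSpace ℝ (Fin d))
    (M : Fin l → (EuclideanSpace ℝ (Fin n) →ᵃ[ℝ] Matrix (Fin m) (Fin m) ℝ)),
    (∀ i x, (M i x).IsSymm) ∧ P = φ '' {x | ∀ i, (M i x).PosSemidef}

/-- `P` has an extended formulation with a single LMI of size `k`. -/
def HasSdpExt {d : ℕ} (P : Set (EuclideanSpace ℝ (Fin d))) (k : ℕ) : Prop :=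
  ∃ (n : ℕ) (φ : EuclideanSpace ℝ (Fin n) →ᵃ[ℝ] EuclideanSpace ℝ (Fin d))
    (M : EuclideanSpace ℝ (Fin n) →ᵃ[ℝ] Matrix (Fin k) (Fin k) ℝ),
    (∀ x, (M x).IsSymm) ∧ P = φ '' {x | (M x).PosSemidef}

/-- `P` has an extended formulation with `l` linear inequalities. -/
def HasLinExt {d : ℕ} (P : Set (EuclideanSpace ℝ (Fin d))) (l : ℕ) : Prop :=
  ∃ (n : ℕ) (φ : EuclideanSpace ℝ (Fin n) →ᵃ[ℝ] EuclideanSpace ℝ (Fin d))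
    (a : Fin l → (EuclideanSpace ℝ (Fin n) →ᵃ[ℝ] ℝ)),
    P = φ '' {x | ∀ i, 0 ≤ a i x}

open Classical in
/-- Semidefinite extension complexity. -/
def sxc {d : ℕ} (P : Set (EuclideanSpace ℝ (Fin d))) : ℕ :=
  if P = ∅ ∨ ∃ p, P = {p} then 0 else sInf {k | HasSdpExt P k}

open Classical in
/-- Linear extension complexity. -/
def xc {d : ℕ} (P : Set (EuclideanSpace ℝ (Fin d))) : ℕ :=
  if P = ∅ ∨ ∃ p, P = {p} then 0 else sInf {l | HasLinExt P l}

/-- Spectral norm of a square real matrix (the operator norm of the induced map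
on Euclidean space; for a symmetric matrix this is the largest absolute value of
an eigenvalue). -/
def specNorm {ι : Type*} [Fintype ι] [DecidableEq ι] (T : Matrix ι ι ℝ) : ℝ :=
  ‖LinearMap.toContinuousLinearMap (Matrix.toEuclideanLin T)‖

/-- Norm of a linear map into square matrices: the maximum of the spectral norm
of the values over the unit ball. -/
def lmNorm {n : ℕ} {ι : Type*} [Fintype ι] [DecidableEq ι]
    (A : EuclideanSpace ℝ (Fin n) →ₗ[ℝ] Matrix ι ι ℝ) : ℝ :=
  sSup {r | ∃ x : EuclideanSpace ℝ (Fin n), ‖x‖ ≤ 1 ∧ r = specNorm (A x)}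

/-- A 0/1-polytope: the convex hull of a set of 0/1-vectors. -/
def IsZeroOnePolytope {d : ℕ} (P : Set (EuclideanSpace ℝ (Fin d))) : Prop :=
  ∃ V : Set (EuclideanSpace ℝ (Fin d)),
    V ⊆ {x | ∀ i, x i = 0 ∨ x i = 1} ∧ P = convexHull ℝ V

open Filter Module in
private lemma exists_recession_dir {E : Type*} [NormedAddCommGroup E] [InnerProductSpace ℝ E]
    [FiniteDimensional ℝ E] {F : Set E} (hcl : IsClosed F) (hcv : Convex ℝ F)
    (hunb : ¬ Bornology.IsBounded F) :
    ∃ u : E, ‖u‖ = 1 ∧ ∀ y ∈ F, ∀ t : ℝ, 0 ≤ t → y + t • u ∈ F := by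
  have hne : F.Nonempty := by
    rcases F.eq_empty_or_nonempty with h | h
    · exact absurd (h ▸ Bornology.isBounded_empty) hunb
    · exact h
  obtain ⟨y0, hy0⟩ := hne
  have hseq : ∀ k : ℕ, ∃ y, y ∈ F ∧ (k : ℝ) < ‖y - y0‖ := by
    intro k
    by_contra h
    push_neg at h
    exact hunb ((Metric.isBounded_closedBall (x := y0) (r := k)).subset
      (fun y hy => by simpa [Metric.mem_closedBall, dist_eq_norm] using h y hy))
  choose y hyF hyn using hseq
  set r : ℕ → ℝ := fun k => ‖y k - y0‖ with hr
  have hrpos : ∀ k, 0 < r k := fun k => lt_of_le_of_lt (Nat.cast_nonneg k) (hyn k)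
  have hrtop : Tendsto r atTop atTop :=
    tendsto_atTop_mono (fun k => (hyn k).le) tendsto_natCast_atTop_atTop
  set dvec : ℕ → E := fun k => (r k)⁻¹ • (y k - y0) with hd
  have hdmem : ∀ k, dvec k ∈ sphere (0 : E) 1 := by
    intro k
    simp only [mem_sphere_iff_norm, sub_zero, hd, norm_smul, norm_inv, norm_norm]
    rw [Real.norm_eq_abs, abs_of_pos (hrpos k), hr, inv_mul_cancel₀ (hrpos k).ne']
  obtain ⟨u, humem, ψ, hψ, hdu⟩ := (isCompact_sphere (0 : E) 1).tendsto_subseq hdmem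
  have hu1 : ‖u‖ = 1 := by simpa [mem_sphere_iff_norm] using humem
  refine ⟨u, hu1, ?_⟩
  intro z hz t ht
  have hrψtop : Tendsto (fun k => r (ψ k)) atTop atTop :=
    hrtop.comp hψ.tendsto_atTop
  have hinv0 : Tendsto (fun k => (r (ψ k))⁻¹) atTop (nhds 0) :=
    tendsto_inv_atTop_zero.comp hrψtop
  -- sequence of convex combinations
  set s : ℕ → ℝ := fun k => t / r (ψ k) with hs
  have hs0 : Tendsto s atTop (nhds 0) := by
    have := hinv0.const_mul t
    simpa [hs, div_eq_mul_inv] using this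
  set zseq : ℕ → E := fun k => (1 - s k) • z + s k • y (ψ k) with hzs
  have hzmem : ∀ᶠ k in atTop, zseq k ∈ F := by
    have hev : ∀ᶠ k in atTop, t ≤ r (ψ k) := hrψtop.eventually_ge_atTop t
    filter_upwards [hev] with k hk
    have hsk0 : 0 ≤ s k := div_nonneg ht (hrpos (ψ k)).le
    have hsk1 : s k ≤ 1 := (div_le_one (hrpos (ψ k))).2 hk
    exact hcv hz (hyF (ψ k)) (by linarith) hsk0 (by ring)
  have hzlim : Tendsto zseq atTop (nhds (z + t • u)) := by
    have key : ∀ k, zseq k = z + t • dvec (ψ k) + s k • (y0 - z) := by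
      intro k
      have hrk := (hrpos (ψ k)).ne'
      simp only [hzs, hd, hs, smul_smul, smul_sub, sub_smul, one_smul, div_eq_mul_inv]
      field_simp
      module
    rw [funext key]
    have h1 : Tendsto (fun k => z + t • dvec (ψ k)) atTop (nhds (z + t • u)) :=
      tendsto_const_nhds.add (hdu.const_smul t)
    have h2 : Tendsto (fun k => s k • (y0 - z)) atTop (nhds 0) := by
      simpa using hs0.smul (tendsto_const_nhds (x := y0 - z))
    simpa using h1.add h2
  exact hcl.mem_of_tendsto hzlim hzmem

open Module in
private lemma key_lemma {n d : ℕ} (C : Set (EuclideanSpace ℝ (Fin n)))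
    (hclosed : IsClosed C) (hconv : Convex ℝ C)
    (φ : EuclideanSpace ℝ (Fin n) →ᵃ[ℝ] EuclideanSpace ℝ (Fin d))
    (V : Finset (EuclideanSpace ℝ (Fin d)))
    (hV : φ '' C = convexHull ℝ (V : Set (EuclideanSpace ℝ (Fin d)))) :
    ∀ (k : ℕ) (L : AffineSubspace ℝ (EuclideanSpace ℝ (Fin n))),
      finrank ℝ L.direction ≤ k →
      φ '' (C ∩ (L : Set (EuclideanSpace ℝ (Fin n)))) = φ '' C →
      ∃ L' : AffineSubspace ℝ (EuclideanSpace ℝ (Fin n)),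
        Bornology.IsBounded (C ∩ (L' : Set (EuclideanSpace ℝ (Fin n)))) ∧
        φ '' (C ∩ (L' : Set (EuclideanSpace ℝ (Fin n)))) = φ '' C := by
  intro k
  induction k with
  | zero =>
    intro L hrank him
    refine ⟨L, ?_, him⟩
    have hbot : L.direction = ⊥ := Submodule.finrank_eq_zero.1 (Nat.le_zero.1 hrank)
    have hsub : ((L : Set (EuclideanSpace ℝ (Fin n)))).Subsingleton := by
      intro x hx y hy
      have := AffineSubspace.vsub_mem_direction hx hy
      rw [hbot, Submodule.mem_bot, vsub_eq_sub, sub_eq_zero] at this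
      exact this
    exact ((hsub.anti (inter_subset_right (s := C))).finite).isBounded
  | succ k ih =>
    intro L hrank him
    by_cases hb : Bornology.IsBounded (C ∩ (L : Set (EuclideanSpace ℝ (Fin n))))
    · exact ⟨L, hb, him⟩
    set F : Set (EuclideanSpace ℝ (Fin n)) := C ∩ (L : Set (EuclideanSpace ℝ (Fin n))) with hF
    have hFcl : IsClosed F := hclosed.inter (L.closed_of_finiteDimensional)
    have hFcv : Convex ℝ F := hconv.inter L.convex
    obtain ⟨u, hu1, hray⟩ := exists_recession_dir hFcl hFcv hb
    have hFne : F.Nonempty := by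
      rcases F.eq_empty_or_nonempty with h | h
      · exact absurd (h ▸ Bornology.isBounded_empty) hb
      · exact h
    obtain ⟨y0, hy0⟩ := hFne
    have huL : u ∈ L.direction := by
      have h1 : y0 + (1 : ℝ) • u ∈ F := hray y0 hy0 1 zero_le_one
      have := AffineSubspace.vsub_mem_direction h1.2 hy0.2
      simpa [vsub_eq_sub] using this
    -- P is bounded
    have hPbdd : Bornology.IsBounded (φ '' C) := by
      rw [hV]
      exact isBounded_convexHull.2 V.finite_toSet.isBounded
    obtain ⟨R, hR⟩ := isBounded_iff_forall_norm_le.1 hPbdd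
    -- u is in the kernel of φ.linear
    have hker : φ.linear u = 0 := by
      by_contra hw
      have hwpos : 0 < ‖φ.linear u‖ := norm_pos_iff.2 hw
      set t : ℝ := (R + ‖φ y0‖ + 1) / ‖φ.linear u‖ with htdef
      have hRpos : 0 ≤ R := le_trans (norm_nonneg _) (hR _ ⟨y0, hy0.1, rfl⟩)
      have ht : 0 ≤ t := div_nonneg (by positivity) hwpos.le
      have hmem : φ (y0 + t • u) ∈ φ '' C := by
        rw [← him]
        exact ⟨y0 + t • u, hray y0 hy0 t ht, rfl⟩
      have heq : φ (y0 + t • u) = t • φ.linear u + φ y0 := by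
        have := φ.map_vadd y0 (t • u)
        simpa [vadd_eq_add, add_comm, LinearMap.map_smul] using this
      have h1 : ‖t • φ.linear u + φ y0‖ ≤ R := heq ▸ hR _ hmem
      have h2 : ‖t • φ.linear u‖ = R + ‖φ y0‖ + 1 := by
        rw [norm_smul, Real.norm_eq_abs, abs_of_nonneg ht, htdef,
          div_mul_cancel₀ _ hwpos.ne']
      have h3 : ‖t • φ.linear u‖ ≤ ‖t • φ.linear u + φ y0‖ + ‖φ y0‖ := by
        calc ‖t • φ.linear u‖ = ‖(t • φ.linear u + φ y0) - φ y0‖ := by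
              rw [add_sub_cancel_right]
          _ ≤ ‖t • φ.linear u + φ y0‖ + ‖φ y0‖ := norm_sub_le _ _
      linarith
    -- V nonempty and preimages
    have hVne : V.Nonempty := by
      rw [← Finset.coe_nonempty]
      by_contra hvn
      rw [not_nonempty_iff_eq_empty] at hvn
      have : φ y0 ∈ φ '' C := ⟨y0, hy0.1, rfl⟩
      rw [hV, hvn, convexHull_empty] at this
      exact this
    have hpre : ∀ v : EuclideanSpace ℝ (Fin d), ∃ x, v ∈ V → x ∈ F ∧ φ x = v := by
      intro v
      by_cases hv : v ∈ V
      · have : v ∈ φ '' (C ∩ (L : Set (EuclideanSpace ℝ (Fin n)))) := by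
          rw [him, hV]
          exact subset_convexHull ℝ _ hv
        obtain ⟨x, hx, hxv⟩ := this
        exact ⟨x, fun _ => ⟨hx, hxv⟩⟩
      · exact ⟨0, fun h => absurd h hv⟩
    choose g hg using hpre
    set α : ℝ := V.sup' hVne (fun v => inner ℝ u (g v)) with hα
    set W : Submodule ℝ (EuclideanSpace ℝ (Fin n)) :=
      LinearMap.ker ((innerSL ℝ u : EuclideanSpace ℝ (Fin n) →L[ℝ] ℝ) : EuclideanSpace ℝ (Fin n) →ₗ[ℝ] ℝ) with hW
    have hmemW : ∀ x, x ∈ W ↔ (inner ℝ u x : ℝ) = 0 := by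
      intro x; simp [hW, LinearMap.mem_ker]
    set H : AffineSubspace ℝ (EuclideanSpace ℝ (Fin n)) := AffineSubspace.mk' (α • u) W with hH
    have huu : (inner ℝ u u : ℝ) = 1 := by
      rw [real_inner_self_eq_norm_sq, hu1]; norm_num
    -- rank drop
    have hltrank : finrank ℝ (L ⊓ H).direction ≤ k := by
      have hle : (L ⊓ H).direction ≤ L.direction ⊓ W := by
        have := AffineSubspace.direction_inf L H
        rwa [hH, AffineSubspace.direction_mk'] at this
      have hnW : u ∉ W := by
        rw [hmemW, huu]; norm_num
      have hlt : L.direction ⊓ W < L.direction := by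
        refine lt_of_le_of_ne inf_le_left fun h => hnW ?_
        have hu' : u ∈ L.direction ⊓ W := h.symm ▸ huL
        exact hu'.2
      calc finrank ℝ (L ⊓ H).direction ≤ finrank ℝ (L.direction ⊓ W : Submodule ℝ _) :=
            Submodule.finrank_mono hle
        _ ≤ k := Nat.lt_succ_iff.1 (lt_of_lt_of_le (Submodule.finrank_lt_finrank_of_lt hlt) hrank)
    refine ih (L ⊓ H) hltrank ?_
    refine Set.Subset.antisymm ?_ ?_
    · rw [← him]
      refine Set.image_mono fun x hx => ⟨hx.1, ?_⟩
      exact SetLike.mem_coe.2 ((AffineSubspace.mem_inf_iff x L H).1 (SetLike.mem_coe.1 hx.2)).1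
    · intro p hp
      rw [hV, Finset.convexHull_eq] at hp
      obtain ⟨lam, hlam0, hlam1, hlamp⟩ := hp
      set y : EuclideanSpace ℝ (Fin n) := V.centerMass lam g with hy
      have hgF : ∀ v ∈ V, g v ∈ F := fun v hv => (hg v hv).1
      have hyF : y ∈ F := hFcv.centerMass_mem hlam0 (by rw [hlam1]; norm_num) hgF
      have hφy : φ y = p := by
        have h1 : y = V.affineCombination ℝ g lam :=
          (affineCombination_eq_centerMass hlam1).symm
        rw [h1, Finset.map_affineCombination V g lam hlam1 φ,
          affineCombination_eq_centerMass hlam1, ← hlamp,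
          Finset.centerMass_eq_of_sum_1 _ _ hlam1, Finset.centerMass_eq_of_sum_1 _ _ hlam1]
        exact Finset.sum_congr rfl fun v hv => by rw [Function.comp_apply, (hg v hv).2, id]
      have hinnery : (inner ℝ u y : ℝ) ≤ α := by
        have h1 : (inner ℝ u y : ℝ) = ∑ v ∈ V, lam v * inner ℝ u (g v) := by
          rw [hy, Finset.centerMass_eq_of_sum_1 _ _ hlam1, inner_sum]
          exact Finset.sum_congr rfl fun v hv => real_inner_smul_right u (g v) (lam v)
        rw [h1]
        calc ∑ v ∈ V, lam v * inner ℝ u (g v) ≤ ∑ v ∈ V, lam v * α :=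
              Finset.sum_le_sum fun v hv => by
                rw [hα]
                exact mul_le_mul_of_nonneg_left (Finset.le_sup' (fun w => (inner ℝ u (g w) : ℝ)) hv) (hlam0 v hv)
          _ = α := by rw [← Finset.sum_mul, hlam1, one_mul]
      set t : ℝ := α - inner ℝ u y with htdef
      have ht : 0 ≤ t := sub_nonneg.2 hinnery
      have hy'F : y + t • u ∈ F := hray y hyF t ht
      have hφy' : φ (y + t • u) = p := by
        have h1 : φ (y + t • u) = φ.linear (t • u) + φ y := by
          have := φ.map_vadd y (t • u)
          simpa [vadd_eq_add, add_comm] using this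
        rw [h1, LinearMap.map_smul, hker, smul_zero, zero_add, hφy]
      have hmemH : y + t • u ∈ H := by
        rw [hH, AffineSubspace.mem_mk', vsub_eq_sub, hmemW]
        rw [inner_sub_right, inner_add_right, real_inner_smul_right, real_inner_smul_right, huu]
        simp [htdef]
      refine ⟨y + t • u, ⟨hy'F.1, ?_⟩, hφy'⟩
      exact SetLike.mem_coe.2 ((AffineSubspace.mem_inf_iff _ L H).2 ⟨hy'F.2, hmemH⟩)

theorem statement3 (n d : ℕ) (C : Set (EuclideanSpace ℝ (Fin n)))
    (hclosed : IsClosed C) (hconv : Convex ℝ C)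
    (φ : EuclideanSpace ℝ (Fin n) →ᵃ[ℝ] EuclideanSpace ℝ (Fin d))
    (hP : IsPolytope (φ '' C)) :
    ∃ L : AffineSubspace ℝ (EuclideanSpace ℝ (Fin n)),
      (L : Set (EuclideanSpace ℝ (Fin n))).Nonempty ∧
      Bornology.IsBounded (C ∩ (L : Set (EuclideanSpace ℝ (Fin n)))) ∧
      φ '' (C ∩ (L : Set (EuclideanSpace ℝ (Fin n)))) = φ '' C := by
  obtain ⟨V, hV⟩ := hP
  rcases C.eq_empty_or_nonempty with rfl | hCne
  · refine ⟨affineSpan ℝ {0}, ⟨0, mem_affineSpan ℝ (Set.mem_singleton 0)⟩, ?_, ?_⟩ <;> simp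
  · obtain ⟨L', hbdd, him⟩ := key_lemma C hclosed hconv φ V hV
      (Module.finrank ℝ (EuclideanSpace ℝ (Fin n))) ⊤
      (by rw [AffineSubspace.direction_top]; exact (finrank_top ℝ _).le)
      (by rw [AffineSubspace.top_coe, Set.inter_univ])
    refine ⟨L', ?_, hbdd, him⟩
    have h1 : (φ '' (C ∩ (L' : Set (EuclideanSpace ℝ (Fin n))))).Nonempty :=
      him ▸ hCne.image φ
    obtain ⟨p, x, hx, rfl⟩ := h1
    exact ⟨x, hx.2⟩
end
end

section
/- Let Q be a compact convex subset of ℝ^n with non-empty interior. Then there exists an affine bijection φ : ℝ^n → ℝ^n such that B^n ⊆ φ(Q) ⊆ n·B^n, where B^n is the Euclidean closed unit ball in ℝ^n. -/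
open Metric Set

noncomputable section

set_option maxHeartbeats 1600000
section JohnAux
open Finset


lemma det_aux {n : ℕ} (hn : 0 < n) (u : EuclideanSpace ℝ (Fin n)) (hu : ‖u‖ = 1) (a b : ℝ) :
    LinearMap.det ((b • LinearMap.id : EuclideanSpace ℝ (Fin n) →ₗ[ℝ] EuclideanSpace ℝ (Fin n)) +
      (a - b) • ((innerSL ℝ u).toLinearMap.smulRight u)) = a * b ^ (n - 1) := by
  set L : EuclideanSpace ℝ (Fin n) →ₗ[ℝ] EuclideanSpace ℝ (Fin n) :=
      (b • LinearMap.id : EuclideanSpace ℝ (Fin n) →ₗ[ℝ] EuclideanSpace ℝ (Fin n)) +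
      (a - b) • ((innerSL ℝ u).toLinearMap.smulRight u) with hLdef
  have hL : ∀ x, L x = b • x + ((a - b) * inner ℝ u x) • u := by
    intro x
    simp [hLdef, LinearMap.smulRight_apply, LinearMap.add_apply, LinearMap.smul_apply, mul_smul]
  have i0 : Fin n := ⟨0, hn⟩
  obtain ⟨B, hB⟩ : ∃ B : OrthonormalBasis (Fin n) ℝ (EuclideanSpace ℝ (Fin n)),
      ∀ i ∈ ({i0} : Set (Fin n)), B i = u := by
    apply Orthonormal.exists_orthonormalBasis_extension_of_card_eq (v := fun _ => u)
    · rw [orthonormal_iff_ite]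
      rintro ⟨i, hi⟩ ⟨j, hj⟩
      simp only [Set.mem_singleton_iff] at hi hj
      subst hi; subst hj
      have h1 : (inner ℝ u u : ℝ) = 1 := by
        rw [real_inner_self_eq_norm_sq, hu]; norm_num
      simpa [Set.restrict] using h1
    · simp [finrank_euclideanSpace_fin, Fintype.card_fin]
  have hBu : B i0 = u := hB i0 rfl
  have huu : (inner ℝ u u : ℝ) = 1 := by
    rw [real_inner_self_eq_norm_sq, hu]; norm_num
  have hdiag : ∀ j, L (B j) = (if j = i0 then a else b) • B j := by
    intro j
    rcases eq_or_ne j i0 with h | h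
    · subst h
      rw [hL, hBu, huu, if_pos rfl]
      rw [mul_one]
      module
    · have horth : (inner ℝ u (B j) : ℝ) = 0 := by
        rw [← hBu]
        have h2 := orthonormal_iff_ite.mp B.orthonormal i0 j
        rwa [if_neg (Ne.symm h)] at h2
      rw [hL, horth, mul_zero, zero_smul, add_zero, if_neg h]
  have hmat : LinearMap.toMatrix B.toBasis B.toBasis L
      = Matrix.diagonal (fun j => if j = i0 then a else b) := by
    ext i j
    rw [LinearMap.toMatrix_apply, OrthonormalBasis.coe_toBasis, hdiag j,
      ← OrthonormalBasis.coe_toBasis, map_smul, Module.Basis.repr_self]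
    rw [Finsupp.smul_apply, Finsupp.single_apply, Matrix.diagonal_apply]
    rcases eq_or_ne i j with rfl | hij
    · simp
    · rw [if_neg (Ne.symm hij), if_neg hij, smul_zero]
  rw [← LinearMap.det_toMatrix B.toBasis, hmat, Matrix.det_diagonal,
    ← Finset.mul_prod_erase Finset.univ _ (Finset.mem_univ i0), if_pos rfl]
  congr 1
  rw [Finset.prod_congr rfl (fun j hj => if_neg (Finset.ne_of_mem_erase hj)),
    Finset.prod_const, Finset.card_erase_of_mem (Finset.mem_univ i0),
    Finset.card_univ, Fintype.card_fin]

lemma arith_xisq (b ε ξ η : ℝ) (hb0 : 0 < b)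
    (hkey : b^2*(ξ-ε)^2 + (1+ε)^2*η^2 ≤ (1+ε)^2*b^2) : (ξ-ε)^2 ≤ (1+ε)^2 := by
  nlinarith [sq_nonneg ((1+ε)*η), mul_pos hb0 hb0]

lemma arith_xilow (ε ξ : ℝ) (hε : 0 < ε) (hξsq : (ξ-ε)^2 ≤ (1+ε)^2) : -1 ≤ ξ := by
  nlinarith [sq_nonneg (ξ - ε + (1+ε))]

lemma arith_goal' (s ε : ℝ) (hs1 : 1 < s) :
    (s+1-2*(1+ε))*(2*(1+ε)*s-s-1) ≤ (1+ε)^2*(s-1)^2 := by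
  nlinarith [sq_nonneg ((s+1)*ε)]

lemma arith_hIneq (s ε b : ℝ) (hs1 : 1 < s)
    (e2 : b^2*(2*(1+ε)*s-s-1)*(s-1) = (s-1-2*ε)*(2*(1+ε)*s-s-1))
    (goal' : (s+1-2*(1+ε))*(2*(1+ε)*s-s-1) ≤ (1+ε)^2*(s-1)^2) :
    b^2*(2*(1+ε)*s-s-1) ≤ (1+ε)^2*(s-1) := by
  nlinarith [e2, goal', hs1]

lemma arith_hF (s ε b ξ : ℝ) (hs0 : 0 < s) (hξs : ξ * s ≤ 1) (hab : b^2 ≤ (1+ε)^2)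
    (hIneq : b^2*(2*(1+ε)*s-s-1) ≤ (1+ε)^2*(s-1)) :
    b^2*(2*(1+ε) - 1 - ξ) ≤ (1+ε)^2*(1 - ξ) := by
  nlinarith [hIneq, mul_nonneg (by linarith : (0:ℝ) ≤ 1 - ξ*s)
    (by linarith : (0:ℝ) ≤ (1+ε)^2 - b^2), hs0]

lemma arith_heta2b (b ε ξ η : ℝ)
    (hkey : b^2*(ξ-ε)^2 + (1+ε)^2*η^2 ≤ (1+ε)^2*b^2) :
    (1+ε)^2*η^2 ≤ b^2*(2*(1+ε) - 1 - ξ)*(ξ + 1) := by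
  nlinarith [hkey]

lemma arith_ball (b ε ξ η : ℝ) (hε : 0 < ε) (hξlow : -1 ≤ ξ)
    (hη2b : (1+ε)^2*η^2 ≤ b^2*(2*(1+ε) - 1 - ξ)*(ξ + 1))
    (hF : b^2*(2*(1+ε) - 1 - ξ) ≤ (1+ε)^2*(1 - ξ)) :
    ξ^2 + η^2 ≤ 1 := by
  have hcomb : (1+ε)^2*(ξ^2+η^2) ≤ (1+ε)^2 := by
    nlinarith [hη2b, mul_nonneg (by linarith : (0:ℝ) ≤ ξ + 1)
      (by linarith : (0:ℝ) ≤ (1+ε)^2*(1-ξ) - b^2*(2*(1+ε)-1-ξ))]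
  have hpos : 0 < (1+ε)^2 := by positivity
  nlinarith [hcomb, hpos]

lemma arith_normle (r : ℝ) (h : r^2 ≤ 1) (h0 : 0 ≤ r) : r ≤ 1 := by nlinarith

lemma arith_CS (b ε ξ η V s : ℝ) (hb0 : 0 < b) (hε : 0 < ε)
    (hkey : b^2*(ξ-ε)^2 + (1+ε)^2*η^2 ≤ (1+ε)^2*b^2)
    (hb2V : b^2*V^2 = (s+1)*(s+1-2*(1+ε)))
    (hsa : 0 ≤ s + 1 - (1+ε)) :
    ξ + η*V ≤ s := by
  have step2 : (1+ε)^2 + b^2*V^2 = (s+1-(1+ε))^2 := by rw [hb2V]; ring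
  have hA : 0 ≤ (1+ε)^2 + b^2*V^2 := by rw [step2]; positivity
  have step1 : ((1+ε)*b*(ξ-ε+η*V))^2
      ≤ (b^2*(ξ-ε)^2 + (1+ε)^2*η^2) * ((1+ε)^2 + b^2*V^2) := by
    nlinarith [sq_nonneg (b*(ξ-ε)*(b*V) - (1+ε)*η*(1+ε))]
  have h4 : (b^2*(ξ-ε)^2 + (1+ε)^2*η^2) * ((1+ε)^2 + b^2*V^2)
      ≤ (1+ε)^2*b^2*((s+1-(1+ε))^2) := by
    calc (b^2*(ξ-ε)^2 + (1+ε)^2*η^2) * ((1+ε)^2 + b^2*V^2)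
        ≤ ((1+ε)^2*b^2) * ((1+ε)^2 + b^2*V^2) := mul_le_mul_of_nonneg_right hkey hA
      _ = (1+ε)^2*b^2*((s+1-(1+ε))^2) := by rw [step2]
  have h5 : (ξ-ε+η*V)^2 ≤ (s+1-(1+ε))^2 := by
    have hpos : 0 < ((1+ε)*b)^2 := by positivity
    nlinarith [step1, h4, hpos]
  have h6 : ξ-ε+η*V ≤ s+1-(1+ε) := by
    have h7 : ξ-ε+η*V ≤ |ξ-ε+η*V| := le_abs_self _
    have h8 : |ξ-ε+η*V| = Real.sqrt ((ξ-ε+η*V)^2) := (Real.sqrt_sq_eq_abs _).symm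
    have h9 : Real.sqrt ((ξ-ε+η*V)^2) ≤ Real.sqrt ((s+1-(1+ε))^2) := Real.sqrt_le_sqrt h5
    rw [Real.sqrt_sq (show (0:ℝ) ≤ s+1-(1+ε) by linarith)] at h9
    calc ξ-ε+η*V ≤ |ξ-ε+η*V| := le_abs_self _
      _ = Real.sqrt ((ξ-ε+η*V)^2) := h8
      _ ≤ s+1-(1+ε) := h9
  linarith

lemma arith_Vs (s ξ η V : ℝ) (hs0 : 0 < s) (hline : ξ + η*V ≤ s) (hV2 : V^2 = s^2-1) :
    (s*ξ - 1) + η*s*V ≤ V^2 := by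
  nlinarith [mul_le_mul_of_nonneg_left hline hs0.le]

lemma mem_of_coords {n : ℕ} {K : Set (EuclideanSpace ℝ (Fin n))} (hK : Convex ℝ K)
    (hB : Metric.closedBall 0 1 ⊆ K) {u w : EuclideanSpace ℝ (Fin n)} {s ξ : ℝ}
    (hu : ‖u‖ = 1) (hworth : (inner ℝ u w : ℝ) = 0) (hpK : s • u ∈ K) (hs1 : 1 < s)
    (hline : ξ + ‖w‖ * Real.sqrt (s^2-1) ≤ s) (hcase : 1/s < ξ) :
    ξ • u + w ∈ K := by
  have hs0 : 0 < s := by linarith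
  have hsne0 : s ≠ 0 := ne_of_gt hs0
  have hs21 : (0:ℝ) < s^2 - 1 := by nlinarith
  have hs21' : s^2 - 1 ≠ 0 := ne_of_gt hs21
  set V : ℝ := Real.sqrt (s^2-1) with hVdef
  have hV2 : V^2 = s^2-1 := Real.sq_sqrt hs21.le
  have hV0 : 0 < V := Real.sqrt_pos.mpr hs21
  have hVne : V ≠ 0 := ne_of_gt hV0
  set η : ℝ := ‖w‖ with hηdef
  have hη0 : 0 ≤ η := norm_nonneg w
  by_cases hηz : η = 0
  · have hw0 : w = 0 := norm_eq_zero.mp (hηdef.symm.trans hηz)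
    have hξpos : 0 < ξ := lt_trans (by positivity) hcase
    have hξles : ξ ≤ s := by
      rw [hηz] at hline; linarith [hline]
    have h0K : (0 : EuclideanSpace ℝ (Fin n)) ∈ K := hB (by simp)
    have hmem := hK hpK h0K (le_of_lt (div_pos hξpos hs0))
      (show 0 ≤ 1 - ξ/s by rw [sub_nonneg, div_le_one hs0]; exact hξles) (by ring)
    have heq2 : (ξ/s) • (s • u) + (1 - ξ/s) • (0 : EuclideanSpace ℝ (Fin n)) = ξ • u := by
      rw [smul_zero, add_zero, smul_smul, div_mul_cancel₀ _ hsne0]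
    rw [hw0, add_zero, ← heq2]
    exact hmem
  · have hη0' : 0 < η := lt_of_le_of_ne hη0 (Ne.symm hηz)
    set w' : EuclideanSpace ℝ (Fin n) := η⁻¹ • w with hw'def
    have hww' : w = η • w' := by
      rw [hw'def, smul_smul, mul_inv_cancel₀ (ne_of_gt hη0'), one_smul]
    have hw'norm : ‖w'‖ = 1 := by
      rw [hw'def, norm_smul, norm_inv, Real.norm_eq_abs, abs_of_pos hη0', ← hηdef,
        inv_mul_cancel₀ (ne_of_gt hη0')]
    have hw'orth : (inner ℝ u w' : ℝ) = 0 := by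
      rw [hw'def, real_inner_smul_right, hworth, mul_zero]
    set q : EuclideanSpace ℝ (Fin n) := (1/s) • u + (V/s) • w' with hqdef
    have hqnorm2 : ‖q‖^2 = 1 := by
      rw [hqdef, norm_add_sq_real, real_inner_smul_left, real_inner_smul_right, hw'orth,
        norm_smul, norm_smul, Real.norm_eq_abs, Real.norm_eq_abs, hu, hw'norm,
        abs_of_pos (by positivity : (0:ℝ) < 1/s), abs_of_pos (by positivity : (0:ℝ) < V/s)]
      field_simp
      nlinarith [hV2]
    have hqK : q ∈ K := hB (by
      simp only [mem_closedBall, dist_zero_right]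
      nlinarith [hqnorm2, norm_nonneg q])
    have hzK : ((1/s) • u : EuclideanSpace ℝ (Fin n)) ∈ K := hB (by
      simp only [mem_closedBall, dist_zero_right]
      rw [norm_smul, Real.norm_eq_abs, hu, mul_one, abs_of_pos (by positivity : (0:ℝ) < 1/s),
        div_le_one hs0]
      linarith)
    set α : ℝ := (s*ξ - 1)/(s^2 - 1) with hαdef
    set β : ℝ := η*s/V with hβdef
    have hsξ : 1 < ξ*s := (div_lt_iff₀ hs0).mp hcase
    have hα0 : 0 ≤ α := div_nonneg (by nlinarith) (le_of_lt hs21)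
    have hβ0 : 0 ≤ β := div_nonneg (mul_nonneg hη0 hs0.le) hV0.le
    have hαβ : α + β ≤ 1 := by
      have hVs : (s*ξ - 1) + η*s*V ≤ V^2 := arith_Vs s ξ η V hs0 hline hV2
      have hsum : α + β = ((s*ξ - 1) + η*s*V)/V^2 := by
        rw [hαdef, hβdef, ← hV2]
        field_simp
      rw [hsum, div_le_one (by positivity)]
      exact hVs
    have hcombo : α • (s • u) + β • q + (1 - α - β) • ((1/s) • u) ∈ K := by
      have h3 : ∑ i : Fin 3, (![α, β, 1-α-β]) i • (![s • u, q, (1/s) • u]) i ∈ K := by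
        apply hK.sum_mem
        · intro i _
          fin_cases i
          · simpa using hα0
          · simpa using hβ0
          · simpa using (show (0:ℝ) ≤ 1 - α - β by linarith)
        · rw [Fin.sum_univ_three]
          change α + β + (1 - α - β) = 1
          ring
        · intro i _
          fin_cases i
          · simpa using hpK
          · simpa using hqK
          · simpa using hzK
      rw [Fin.sum_univ_three] at h3
      simpa using h3
    have c1 : α*s + (1-α)*(1/s) = ξ := by
      rw [hαdef]
      field_simp
      ring
    have c2 : β*(V/s) = η := by
      rw [hβdef]
      field_simp
    have hyeq : ξ • u + w = α • (s • u) + β • q + (1 - α - β) • ((1/s) • u) := by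
      rw [hww', hqdef, ← c1, ← c2]
      module
    rw [hyeq]
    exact hcombo

lemma john_step {n : ℕ} {K : Set (EuclideanSpace ℝ (Fin n))} (hK : Convex ℝ K)
    (hB : Metric.closedBall 0 1 ⊆ K) {p : EuclideanSpace ℝ (Fin n)} (hp : p ∈ K)
    (hs : (n : ℝ) < ‖p‖) :
    ∃ (L : EuclideanSpace ℝ (Fin n) →ₗ[ℝ] EuclideanSpace ℝ (Fin n))
      (c : EuclideanSpace ℝ (Fin n)),
      (∀ x, ‖x‖ ≤ 1 → L x + c ∈ K) ∧ 1 < |LinearMap.det L| := by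
  classical
  -- dimension is positive
  have hn : 0 < n := by
    rcases Nat.eq_zero_or_pos n with h | h
    · exfalso
      subst h
      have : ‖p‖ = 0 := by simp [EuclideanSpace.norm_eq]
      rw [this] at hs
      exact absurd hs (by norm_num)
    · exact h
  set s : ℝ := ‖p‖ with hsdef
  have hn1 : (1:ℝ) ≤ (n:ℝ) := by exact_mod_cast hn
  have hs1 : 1 < s := lt_of_le_of_lt hn1 hs
  have hs0 : 0 < s := by linarith
  set u : EuclideanSpace ℝ (Fin n) := s⁻¹ • p with hudef
  have hu : ‖u‖ = 1 := by
    rw [hudef, norm_smul, norm_inv, Real.norm_eq_abs, abs_of_pos hs0, ← hsdef,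
      inv_mul_cancel₀ (ne_of_gt hs0)]
  have hpu : p = s • u := by
    rw [hudef, smul_smul, mul_inv_cancel₀ (ne_of_gt hs0), one_smul]
  have huu : (inner ℝ u u : ℝ) = 1 := by
    rw [real_inner_self_eq_norm_sq, hu]; norm_num
  -- parameters
  set δ : ℝ := ((n:ℝ) - 1) / (s - 1) with hδdef
  have hδ0 : 0 ≤ δ := div_nonneg (by linarith) (by linarith)
  have hδ1 : δ < 1 := (div_lt_one (by linarith)).mpr (by linarith)
  set ε : ℝ := min ((1 - δ)/4) ((s-1)/4) with hεdef
  have hε : 0 < ε := lt_min (by linarith) (by linarith)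
  have hε1 : ε ≤ (1 - δ)/4 := min_le_left _ _
  have hε2 : ε ≤ (s-1)/4 := min_le_right _ _
  set b : ℝ := Real.sqrt (1 - 2*ε/(s-1)) with hbdef
  have harg : (1:ℝ)/2 ≤ 1 - 2*ε/(s-1) := by
    have : 2*ε/(s-1) ≤ 1/2 := by
      rw [div_le_iff₀ (by linarith)]
      linarith
    linarith
  have harg1 : 1 - 2*ε/(s-1) ≤ 1 := by
    have : 0 ≤ 2*ε/(s-1) := div_nonneg (by linarith) (by linarith)
    linarith
  have hb2 : b^2 = 1 - 2*ε/(s-1) := Real.sq_sqrt (by linarith)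
  have hb0 : 0 < b := Real.sqrt_pos.mpr (by linarith)
  have hb1 : b ≤ 1 := Real.sqrt_le_one.mpr (by linarith)
  have hab : b^2 ≤ (1+ε)^2 := by nlinarith
  clear_value δ ε b
  -- the linear map and translation
  set L : EuclideanSpace ℝ (Fin n) →ₗ[ℝ] EuclideanSpace ℝ (Fin n) :=
      (b • LinearMap.id : EuclideanSpace ℝ (Fin n) →ₗ[ℝ] EuclideanSpace ℝ (Fin n)) +
      ((1+ε) - b) • ((innerSL ℝ u).toLinearMap.smulRight u) with hLdef
  have hL : ∀ x, L x = b • x + (((1+ε) - b) * inner ℝ u x) • u := by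
    intro x
    simp [hLdef, LinearMap.smulRight_apply, LinearMap.add_apply, LinearMap.smul_apply, mul_smul]
  set c : EuclideanSpace ℝ (Fin n) := ε • u with hcdef
  -- determinant
  have hdet : LinearMap.det L = (1+ε) * b ^ (n-1) := det_aux hn u hu (1+ε) b
  have hdet1 : 1 < |LinearMap.det L| := by
    rw [hdet]
    have hbpow : 0 < b ^ (n-1) := pow_pos hb0 _
    have hsq : ((1+ε) * b^(n-1))^2 = (1+ε)^2 * (b^2)^(n-1) := by
      rw [mul_pow, ← pow_mul, ← pow_mul, Nat.mul_comm]
    have hcast : ((n-1 : ℕ) : ℝ) = (n:ℝ) - 1 := by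
      rw [Nat.cast_sub hn, Nat.cast_one]
    have hbern : 1 - 2*ε*δ ≤ (b^2)^(n-1) := by
      have h := one_add_mul_le_pow (a := -(2*ε/(s-1))) (by nlinarith) (n-1)
      rw [hcast] at h
      have heq : 1 + ((n:ℝ) - 1) * -(2*ε/(s-1)) = 1 - 2*ε*δ := by
        rw [hδdef]
        field_simp
        ring
      rw [heq] at h
      calc 1 - 2*ε*δ ≤ (1 + -(2*ε/(s-1)))^(n-1) := h
        _ = (b^2)^(n-1) := by rw [hb2]; ring_nf
    have h2 : 1 < ((1+ε) * b^(n-1))^2 := by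
      rw [hsq]
      have hδε : 2*ε*δ ≤ (1-δ)/2*δ := by nlinarith
      have hnn : 0 ≤ 1 - 2*ε*δ := by nlinarith
      have hup : (1 + ε)^2 * (1 - 2*ε*δ) ≤ (1+ε)^2 * (b^2)^(n-1) :=
        mul_le_mul_of_nonneg_left hbern (by positivity)
      have hε3 : ε ≤ 1/4 := by linarith
      have hst : 1 < (1+ε)^2 * (1 - 2*ε*δ) := by
        nlinarith [mul_pos hε hε, mul_nonneg (mul_nonneg hε.le hε.le) hε.le, hδ0, hδ1, hε1, hε3]
      linarith
    nlinarith [abs_nonneg ((1+ε) * b^(n-1)), sq_abs ((1+ε) * b^(n-1)), h2]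
  refine ⟨L, c, ?_, hdet1⟩
  -- membership
  intro x hx
  set ζ : ℝ := inner ℝ u x with hζdef
  have hζx : ζ^2 ≤ ‖x‖^2 := by
    have h1 := abs_real_inner_le_norm u x
    rw [hu, one_mul] at h1
    have h2 : |ζ| ≤ ‖x‖ := by rw [hζdef]; exact h1
    nlinarith [abs_nonneg ζ, sq_abs ζ, norm_nonneg x]
  have hx2 : ‖x‖^2 ≤ 1 := by nlinarith [norm_nonneg x]
  set ξ : ℝ := (1+ε)*ζ + ε with hξdef
  have hy : L x + c = b • x + (((1+ε)-b)*ζ + ε) • u := by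
    rw [hL x, hcdef, ← hζdef, add_smul]
    abel
  set w : EuclideanSpace ℝ (Fin n) := (L x + c) - ξ • u with hwdef
  have hway : L x + c = ξ • u + w := by rw [hwdef]; abel
  have hww : w = b • x - (b*ζ) • u := by
    rw [hwdef, hy, hξdef]
    module
  have hworth : (inner ℝ u w : ℝ) = 0 := by
    rw [hww, inner_sub_right, real_inner_smul_right, real_inner_smul_right, huu, ← hζdef]
    ring
  set η : ℝ := ‖w‖ with hηdef
  have hη0 : 0 ≤ η := norm_nonneg w
  clear_value ζ ξ
  have hηsq : η^2 = b^2 * (‖x‖^2 - ζ^2) := by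
    have hfac : w = b • (x - ζ • u) := by rw [hww]; module
    have h2 : ‖x - ζ • u‖^2 = ‖x‖^2 - ζ^2 := by
      rw [norm_sub_sq_real, real_inner_smul_right, real_inner_comm, ← hζdef, norm_smul,
        Real.norm_eq_abs, hu, mul_one, sq_abs]
      ring
    rw [hηdef, hfac, norm_smul, Real.norm_eq_abs, mul_pow, sq_abs, h2]
  clear_value η w s u L c
  have hkey : b^2*(ξ-ε)^2 + (1+ε)^2*η^2 ≤ (1+ε)^2*b^2 := by
    have hξε : ξ - ε = (1+ε)*ζ := by rw [hξdef]; ring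
    rw [hξε, hηsq]
    nlinarith [mul_nonneg (mul_nonneg (sq_nonneg (1+ε)) (sq_nonneg b)) (sub_nonneg.mpr hx2)]
  have hξsq : (ξ-ε)^2 ≤ (1+ε)^2 := arith_xisq b ε ξ η hb0 hkey
  have hξlow : -1 ≤ ξ := arith_xilow ε ξ hε hξsq
  -- main inequality on b
  have hsm1 : s - 1 ≠ 0 := by intro h; linarith
  have e1 : b^2*(s-1) = s - 1 - 2*ε := by
    rw [hb2, sub_mul, one_mul, div_mul_cancel₀ _ hsm1]
  have goal' : (s+1-2*(1+ε))*(2*(1+ε)*s-s-1) ≤ (1+ε)^2*(s-1)^2 :=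
    arith_goal' s ε hs1
  have e2 : b^2*(2*(1+ε)*s-s-1)*(s-1) = (s-1-2*ε)*(2*(1+ε)*s-s-1) := by
    rw [← e1]; ring
  have hIneq : b^2*(2*(1+ε)*s-s-1) ≤ (1+ε)^2*(s-1) :=
    arith_hIneq s ε b hs1 e2 goal'
  by_cases hcase : ξ ≤ 1/s
  · -- y lands in the unit ball
    apply hB
    simp only [mem_closedBall, dist_zero_right]
    have hnormy : ‖L x + c‖^2 = ξ^2 + η^2 := by
      rw [hway, norm_add_sq_real, real_inner_smul_left, hworth, norm_smul,
        Real.norm_eq_abs, hu, mul_one, sq_abs, ← hηdef]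
      ring
    have hξs : ξ * s ≤ 1 := by
      have := (le_div_iff₀ hs0).mp hcase
      linarith
    have hF : b^2*(2*(1+ε) - 1 - ξ) ≤ (1+ε)^2*(1 - ξ) := arith_hF s ε b ξ hs0 hξs hab hIneq
    have hη2b : (1+ε)^2*η^2 ≤ b^2*(2*(1+ε) - 1 - ξ)*(ξ + 1) := arith_heta2b b ε ξ η hkey
    have hball : ξ^2 + η^2 ≤ 1 := arith_ball b ε ξ η hε hξlow hη2b hF
    have hy2 : ‖L x + c‖^2 ≤ 1 := by rw [hnormy]; exact hball
    exact arith_normle _ hy2 (norm_nonneg _)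
  · rw [not_le] at hcase
    clear hLdef hL hy hwdef hww hεdef hδdef hbdef hudef hsdef hdet hdet1 hζdef hζx hx2 hηsq hξdef hξsq e1 e2 goal' hIneq hx
    have hsne0 : s ≠ 0 := ne_of_gt hs0
    have hs21 : (0:ℝ) < s^2 - 1 := by
      have h := mul_pos (show (0:ℝ) < s-1 by linarith) (show (0:ℝ) < s+1 by linarith)
      have h2 : (s-1)*(s+1) = s^2-1 := by ring
      linarith
    have hs21' : s^2 - 1 ≠ 0 := ne_of_gt hs21
    set V : ℝ := Real.sqrt (s^2-1) with hVdef
    have hV2 : V^2 = s^2-1 := Real.sq_sqrt hs21.le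
    have hV0 : 0 < V := Real.sqrt_pos.mpr hs21
    have hVne : V ≠ 0 := ne_of_gt hV0
    have hb2V : b^2*V^2 = (s+1)*(s+1-2*(1+ε)) := by
      rw [hV2, hb2]
      field_simp
      ring
    have hsa : (0:ℝ) ≤ s + 1 - (1+ε) := by linarith
    have hline : ξ + η*V ≤ s := arith_CS b ε ξ η V s hb0 hε hkey hb2V hsa
    have hline' : ξ + ‖w‖ * Real.sqrt (s^2-1) ≤ s := by
      rw [← hηdef, ← hVdef]; exact hline
    have hpK : s • u ∈ K := hpu ▸ hp
    rw [hway]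
    exact mem_of_coords hK hB hu hworth hpK hs1 hline' hcase

end JohnAux

theorem statement4 (n : ℕ) (Q : Set (EuclideanSpace ℝ (Fin n)))
    (hcomp : IsCompact Q) (hconv : Convex ℝ Q) (hint : (interior Q).Nonempty) :
    ∃ φ : EuclideanSpace ℝ (Fin n) ≃ᵃ[ℝ] EuclideanSpace ℝ (Fin n),
      Metric.closedBall 0 1 ⊆ ⇑φ '' Q ∧ ⇑φ '' Q ⊆ Metric.closedBall 0 n := by
  classical
  set S : Set ((EuclideanSpace ℝ (Fin n) →L[ℝ] EuclideanSpace ℝ (Fin n))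
      × EuclideanSpace ℝ (Fin n)) :=
    {w | ∀ x ∈ Metric.closedBall (0 : EuclideanSpace ℝ (Fin n)) 1, w.1 x + w.2 ∈ Q} with hSdef
  set f : ((EuclideanSpace ℝ (Fin n) →L[ℝ] EuclideanSpace ℝ (Fin n))
      × EuclideanSpace ℝ (Fin n)) → ℝ :=
    fun w => |LinearMap.det (w.1 : EuclideanSpace ℝ (Fin n) →ₗ[ℝ] EuclideanSpace ℝ (Fin n))|
    with hfdef
  have hfcont : Continuous f := (ContinuousLinearMap.continuous_det.comp continuous_fst).abs
  -- Q is bounded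
  obtain ⟨R, hR⟩ := hcomp.isBounded.subset_closedBall 0
  have hQne : Q.Nonempty := hint.mono interior_subset
  have hR0 : 0 ≤ R := by
    obtain ⟨z, hz⟩ := hQne
    have := hR hz
    simp only [mem_closedBall, dist_zero_right] at this
    linarith [norm_nonneg z]
  -- S is closed
  have hSclosed : IsClosed S := by
    have : S = ⋂ x ∈ Metric.closedBall (0 : EuclideanSpace ℝ (Fin n)) 1,
        {w : (EuclideanSpace ℝ (Fin n) →L[ℝ] EuclideanSpace ℝ (Fin n))
          × EuclideanSpace ℝ (Fin n) | w.1 x + w.2 ∈ Q} := by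
      ext w; simp [hSdef]
    rw [this]
    refine isClosed_biInter fun x _ => ?_
    exact IsClosed.preimage (by fun_prop) hcomp.isClosed
  -- S is bounded
  have hSsub : S ⊆ (Metric.closedBall 0 (2*R) ×ˢ Metric.closedBall 0 R) := by
    rintro ⟨L, c⟩ hw
    have hc : ‖c‖ ≤ R := by
      have h0 := hw 0 (by simp)
      simp only [map_zero, zero_add] at h0
      have := hR h0
      simpa [mem_closedBall, dist_zero_right] using this
    constructor
    · simp only [mem_closedBall, dist_zero_right]
      refine ContinuousLinearMap.opNorm_le_bound _ (by linarith) fun x => ?_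
      rcases eq_or_ne x 0 with rfl | hx
      · simp
      · have hxpos : 0 < ‖x‖ := norm_pos_iff.mpr hx
        set x' := ‖x‖⁻¹ • x with hx'def
        have hx'1 : ‖x'‖ ≤ 1 := by
          rw [hx'def, norm_smul, norm_inv, norm_norm, inv_mul_cancel₀ (ne_of_gt hxpos)]
        have hmem := hw x' (by simpa [mem_closedBall, dist_zero_right] using hx'1)
        have hQ := hR hmem
        simp only [mem_closedBall, dist_zero_right] at hQ
        have hLx' : ‖L x'‖ ≤ 2*R := by
          calc ‖L x'‖ = ‖(L x' + c) - c‖ := by rw [add_sub_cancel_right]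
            _ ≤ ‖L x' + c‖ + ‖c‖ := norm_sub_le _ _
            _ ≤ R + R := add_le_add hQ hc
            _ = 2*R := by ring
        have hLx : L x = ‖x‖ • L x' := by
          rw [hx'def, map_smul, smul_smul, mul_inv_cancel₀ (ne_of_gt hxpos), one_smul]
        rw [hLx, norm_smul, norm_norm, mul_comm]
        exact mul_le_mul_of_nonneg_right hLx' hxpos.le
    · simpa [mem_closedBall, dist_zero_right] using hc
  have hScompact : IsCompact S :=
    isCompact_iff_isClosed_bounded.mpr ⟨hSclosed,
      ((isBounded_closedBall).prod (isBounded_closedBall)).subset hSsub⟩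
  -- a candidate with positive determinant
  obtain ⟨x₀, hx₀⟩ := hint
  obtain ⟨r, hr, hball⟩ := Metric.mem_nhds_iff.mp (mem_interior_iff_mem_nhds.mp hx₀)
  have hQr : Metric.closedBall x₀ (r/2) ⊆ Q :=
    (Metric.closedBall_subset_ball (by linarith)).trans hball
  set w₀ : ((EuclideanSpace ℝ (Fin n) →L[ℝ] EuclideanSpace ℝ (Fin n))
      × EuclideanSpace ℝ (Fin n)) :=
    ((r/2) • ContinuousLinearMap.id ℝ (EuclideanSpace ℝ (Fin n)), x₀) with hw₀def
  have hw₀S : w₀ ∈ S := by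
    intro x hx
    simp only [mem_closedBall, dist_zero_right] at hx
    apply hQr
    simp only [hw₀def, ContinuousLinearMap.coe_smul', ContinuousLinearMap.coe_id', Pi.smul_apply,
      id_eq, mem_closedBall]
    rw [dist_eq_norm, add_sub_cancel_right, norm_smul, Real.norm_eq_abs,
      abs_of_pos (by linarith : (0:ℝ) < r/2)]
    calc r/2 * ‖x‖ ≤ r/2 * 1 := mul_le_mul_of_nonneg_left hx (by linarith)
      _ = r/2 := mul_one _
  have hfw₀ : f w₀ = (r/2)^n := by
    rw [hfdef, hw₀def]
    simp only [ContinuousLinearMap.coe_smul, ContinuousLinearMap.coe_id]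
    rw [LinearMap.det_smul, LinearMap.det_id, mul_one, finrank_euclideanSpace_fin]
    rw [abs_of_pos (by positivity)]
  -- maximize
  obtain ⟨wm, hwmS, hwmax⟩ := hScompact.exists_isMaxOn ⟨w₀, hw₀S⟩ hfcont.continuousOn
  have hfwm : (r/2)^n ≤ f wm := by
    have h : f w₀ ≤ f wm := hwmax hw₀S
    rwa [hfw₀] at h
  have hfpos : 0 < f wm := lt_of_lt_of_le (by positivity) hfwm
  have hdetne : LinearMap.det (wm.1 : EuclideanSpace ℝ (Fin n) →ₗ[ℝ] EuclideanSpace ℝ (Fin n)) ≠ 0 := by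
    intro h
    rw [hfdef] at hfpos
    simp only [h, abs_zero] at hfpos
    exact lt_irrefl 0 hfpos
  set eL := LinearMap.equivOfDetNeZero _ hdetne with heLdef
  have heL : ∀ z, eL z = wm.1 z := fun z => rfl
  -- the affine equivalence
  set φ : EuclideanSpace ℝ (Fin n) ≃ᵃ[ℝ] EuclideanSpace ℝ (Fin n) :=
    (AffineEquiv.constVAdd ℝ (EuclideanSpace ℝ (Fin n)) (-wm.2)).trans
      eL.symm.toAffineEquiv with hφdef
  have hφ : ∀ y, φ y = eL.symm (-wm.2 + y) := fun y => rfl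
  have hφsymm : ∀ z, φ.symm z = wm.1 z + wm.2 := by
    intro z
    rw [show φ.symm z = φ.toEquiv.symm z from rfl, Equiv.symm_apply_eq]
    rw [show φ.toEquiv (wm.1 z + wm.2) = φ (wm.1 z + wm.2) from rfl, hφ]
    have h1 : -wm.2 + (wm.1 z + wm.2) = wm.1 z := by abel
    rw [h1, ← heL z, LinearEquiv.symm_apply_apply]
  -- membership characterization of the image
  have himg : ∀ z, z ∈ ⇑φ '' Q ↔ wm.1 z + wm.2 ∈ Q := by
    intro z
    constructor
    · rintro ⟨y, hy, rfl⟩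
      rw [← hφsymm (φ y)]
      simpa using hy
    · intro h
      exact ⟨φ.symm z, by rwa [hφsymm], by simp⟩
  refine ⟨φ, ?_, ?_⟩
  · intro z hz
    rw [himg]
    exact hwmS z hz
  · -- the John-step contradiction
    intro pz hpz
    by_contra hout
    simp only [mem_closedBall, dist_zero_right, not_le] at hout
    have hKconv : Convex ℝ (⇑φ '' Q) := by
      have := hconv.affine_image φ.toAffineMap
      simpa using this
    have hKB : Metric.closedBall 0 1 ⊆ ⇑φ '' Q := by
      intro z hz
      rw [himg]
      exact hwmS z hz
    obtain ⟨L₁, c₁, hmem₁, hdet₁⟩ := john_step hKconv hKB hpz hout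
    set wnew : ((EuclideanSpace ℝ (Fin n) →L[ℝ] EuclideanSpace ℝ (Fin n))
        × EuclideanSpace ℝ (Fin n)) :=
      (wm.1.comp (LinearMap.toContinuousLinearMap L₁), wm.1 c₁ + wm.2) with hwnewdef
    have hwnewS : wnew ∈ S := by
      intro x hx
      simp only [mem_closedBall, dist_zero_right] at hx
      have hmem := hmem₁ x hx
      rw [himg] at hmem
      have heq : wnew.1 x + wnew.2 = wm.1 (L₁ x + c₁) + wm.2 := by
        simp only [hwnewdef, ContinuousLinearMap.comp_apply, map_add,
          LinearMap.coe_toContinuousLinearMap']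
        abel
      rw [heq]
      exact hmem
    have hfnew : f wnew = f wm * |LinearMap.det L₁| := by
      rw [hfdef, hwnewdef]
      simp only [ContinuousLinearMap.coe_comp, LinearMap.coe_toContinuousLinearMap]
      exact (congrArg abs (LinearMap.det_comp (wm.1 : EuclideanSpace ℝ (Fin n) →ₗ[ℝ] EuclideanSpace ℝ (Fin n)) L₁)).trans (abs_mul _ _)
    have hcontra : f wnew ≤ f wm := hwmax hwnewS
    rw [hfnew] at hcontra
    nlinarith [hfpos, hdet₁, hcontra]
end
end

section
/- Let k = ℓ·m, let A, A' : ℝ^n → Sym_k(ℝ) be linear maps, φ, φ' : ℝ^n → ℝ^d linear maps and t, t' ∈ ℝ^d. Suppose the spectrahedra Q = {x ∈ ℝ^n : A(x) + I positive semidefinite} and Q' = {x ∈ ℝ^n : A'(x) + I positive semidefinite} both satisfy B^n ⊆ Q ⊆ n·B^n and B^n ⊆ Q' ⊆ n·B^n, and that the compact sets P = φ(Q) + t and P' = φ'(Q') + t' are both contained in ρ·B^d for some ρ > 0. Then dist(P, P') ≤ ρ·n²·‖A − A'‖ + n·‖φ − φ'‖ + ‖t − t'‖. -/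
open Metric Set

noncomputable section

section Aux

open scoped RealInnerProductSpace Matrix

variable {ι : Type*} [Fintype ι] [DecidableEq ι]

lemma specNorm_smul (c : ℝ) (T : Matrix ι ι ℝ) : specNorm (c • T) = |c| * specNorm T := by
  unfold specNorm
  rw [map_smul, map_smul, show |c| = ‖c‖ from rfl]
  exact norm_smul (β := EuclideanSpace ℝ ι →L[ℝ] EuclideanSpace ℝ ι) c _

lemma specNorm_neg (T : Matrix ι ι ℝ) : specNorm (-T) = specNorm T := by
  unfold specNorm
  rw [map_neg, map_neg, norm_neg]

lemma abs_dot_le (T : Matrix ι ι ℝ) (v : ι → ℝ) :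
    |dotProduct v (T *ᵥ v)| ≤ specNorm T * dotProduct v v := by
  set v' : EuclideanSpace ℝ ι := (WithLp.equiv 2 (ι → ℝ)).symm v with hv'
  set L := LinearMap.toContinuousLinearMap (Matrix.toEuclideanLin T) with hL
  have h1 : dotProduct v (T *ᵥ v) = ⟪v', L v'⟫ := by
    rw [hL, LinearMap.coe_toContinuousLinearMap', hv',
      WithLp.equiv_symm_apply, Matrix.toEuclideanLin_apply_piLp_toLp,
      EuclideanSpace.inner_toLp_toLp]
    simp [dotProduct_comm]
  have h2 : dotProduct v v = ⟪v', v'⟫ := by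
    rw [hv', WithLp.equiv_symm_apply, EuclideanSpace.inner_toLp_toLp]; simp
  rw [h1, h2, real_inner_self_eq_norm_sq]
  calc |⟪v', L v'⟫| ≤ ‖v'‖ * ‖L v'‖ := abs_real_inner_le_norm _ _
    _ ≤ ‖v'‖ * (‖L‖ * ‖v'‖) :=
        mul_le_mul_of_nonneg_left (L.le_opNorm v') (norm_nonneg _)
    _ = specNorm T * ‖v'‖ ^ 2 := by unfold specNorm; rw [← hL]; ring

lemma isHermitian_of_isSymm {T : Matrix ι ι ℝ} (hT : T.IsSymm) : T.IsHermitian := by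
  rwa [Matrix.IsHermitian, Matrix.conjTranspose_eq_transpose_of_trivial]

lemma psd_of_specNorm_le {T : Matrix ι ι ℝ} (hT : T.IsSymm) {c : ℝ}
    (h : specNorm T ≤ c) : (T + c • 1).PosSemidef := by
  refine Matrix.PosSemidef.of_dotProduct_mulVec_nonneg ((isHermitian_of_isSymm hT).add
    (isHermitian_of_isSymm ((Matrix.isSymm_one).smul c))) fun v => ?_
  have hvv : (0:ℝ) ≤ dotProduct v v :=
    Finset.sum_nonneg fun i _ => mul_self_nonneg _
  have habs := abs_dot_le T v
  have h1 : dotProduct (star v) ((T + c • 1) *ᵥ v)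
      = dotProduct v (T *ᵥ v) + c * dotProduct v v := by
    simp [Matrix.add_mulVec, dotProduct_add, Matrix.smul_mulVec,
      Matrix.one_mulVec, dotProduct_smul, smul_eq_mul]
  rw [h1]
  have h2 : specNorm T * dotProduct v v ≤ c * dotProduct v v :=
    mul_le_mul_of_nonneg_right h hvv
  have h3 := neg_abs_le (dotProduct v (T *ᵥ v))
  linarith

lemma psd_smul {M : Matrix ι ι ℝ} (hM : M.PosSemidef) {c : ℝ} (hc : 0 ≤ c) :
    (c • M).PosSemidef := by
  refine Matrix.PosSemidef.of_dotProduct_mulVec_nonneg (isHermitian_of_isSymm ?_) fun v => ?_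
  · have h := hM.1
    rw [Matrix.IsHermitian, Matrix.conjTranspose_eq_transpose_of_trivial] at h
    exact Matrix.IsSymm.smul h c
  · have h := hM.dotProduct_mulVec_nonneg v
    have h1 : dotProduct (star v) ((c • M) *ᵥ v)
        = c * dotProduct (star v) (M *ᵥ v) := by
      rw [Matrix.smul_mulVec, dotProduct_smul, smul_eq_mul]
    rw [h1]
    exact mul_nonneg hc h

lemma psd_add {M N : Matrix ι ι ℝ} (hM : M.PosSemidef) (hN : N.PosSemidef) :
    (M + N).PosSemidef := by
  refine Matrix.PosSemidef.of_dotProduct_mulVec_nonneg (hM.1.add hN.1) fun v => ?_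
  rw [Matrix.add_mulVec, dotProduct_add]
  exact add_nonneg (hM.dotProduct_mulVec_nonneg v) (hN.dotProduct_mulVec_nonneg v)

section lm

variable {n : ℕ}

lemma lmNorm_bddAbove (A : EuclideanSpace ℝ (Fin n) →ₗ[ℝ] Matrix ι ι ℝ) :
    BddAbove {r | ∃ x : EuclideanSpace ℝ (Fin n), ‖x‖ ≤ 1 ∧ r = specNorm (A x)} := by
  set g : EuclideanSpace ℝ (Fin n) →ₗ[ℝ] (EuclideanSpace ℝ ι →L[ℝ] EuclideanSpace ℝ ι) :=
    ((LinearMap.toContinuousLinearMap :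
        (EuclideanSpace ℝ ι →ₗ[ℝ] EuclideanSpace ℝ ι) ≃ₗ[ℝ]
          (EuclideanSpace ℝ ι →L[ℝ] EuclideanSpace ℝ ι)).toLinearMap.comp
      (Matrix.toEuclideanLin :
        Matrix ι ι ℝ ≃ₗ[ℝ] (EuclideanSpace ℝ ι →ₗ[ℝ] EuclideanSpace ℝ ι)).toLinearMap).comp A
    with hg
  refine ⟨‖LinearMap.toContinuousLinearMap g‖, fun r hr => ?_⟩
  obtain ⟨x, hx1, rfl⟩ := hr
  have hgx : specNorm (A x) = ‖LinearMap.toContinuousLinearMap g x‖ := by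
    rw [LinearMap.coe_toContinuousLinearMap']; rfl
  rw [hgx]
  exact ContinuousLinearMap.unit_le_opNorm _ _ hx1

lemma le_lmNorm (A : EuclideanSpace ℝ (Fin n) →ₗ[ℝ] Matrix ι ι ℝ)
    {x : EuclideanSpace ℝ (Fin n)} (hx : ‖x‖ ≤ 1) : specNorm (A x) ≤ lmNorm A :=
  le_csSup (lmNorm_bddAbove A) ⟨x, hx, rfl⟩

lemma specNorm_zero : specNorm (0 : Matrix ι ι ℝ) = 0 := by
  unfold specNorm; rw [map_zero, map_zero, norm_zero]

lemma lmNorm_nonneg (A : EuclideanSpace ℝ (Fin n) →ₗ[ℝ] Matrix ι ι ℝ) : 0 ≤ lmNorm A := by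
  have h := le_lmNorm A (x := 0) (by simp)
  rw [map_zero, specNorm_zero] at h
  exact h

lemma specNorm_apply_le (A : EuclideanSpace ℝ (Fin n) →ₗ[ℝ] Matrix ι ι ℝ)
    (x : EuclideanSpace ℝ (Fin n)) : specNorm (A x) ≤ lmNorm A * ‖x‖ := by
  rcases eq_or_ne x 0 with rfl | hx
  · rw [map_zero, specNorm_zero, norm_zero, mul_zero]
  · have hnx : (0:ℝ) < ‖x‖ := norm_pos_iff.mpr hx
    have hu : ‖(‖x‖⁻¹ • x : EuclideanSpace ℝ (Fin n))‖ ≤ 1 := by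
      rw [norm_smul, norm_inv, norm_norm, inv_mul_cancel₀ hnx.ne']
    have h := le_lmNorm A hu
    rw [map_smul, specNorm_smul, abs_of_nonneg (inv_nonneg.mpr hnx.le)] at h
    calc specNorm (A x) = ‖x‖ * (‖x‖⁻¹ * specNorm (A x)) := by
          field_simp
      _ ≤ ‖x‖ * lmNorm A := mul_le_mul_of_nonneg_left h hnx.le
      _ = lmNorm A * ‖x‖ := mul_comm _ _

lemma lmNorm_sub_comm (A A' : EuclideanSpace ℝ (Fin n) →ₗ[ℝ] Matrix ι ι ℝ) :
    lmNorm (A - A') = lmNorm (A' - A) := by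
  unfold lmNorm
  congr 1
  ext r
  have key : ∀ x : EuclideanSpace ℝ (Fin n),
      specNorm ((A - A') x) = specNorm ((A' - A) x) := fun x => by
    rw [show ((A - A') : _ →ₗ[ℝ] _) x = -((A' - A) x) by simp, specNorm_neg]
  constructor <;> rintro ⟨x, hx, rfl⟩ <;> exact ⟨x, hx, by rw [key x]⟩

end lm

/-- One-sided approximation lemma. -/
lemma oneSide {n : ℕ} (A A' : EuclideanSpace ℝ (Fin n) →ₗ[ℝ] Matrix ι ι ℝ)
    (hsymm : ∀ x, (A x).IsSymm) (hsymm' : ∀ x, (A' x).IsSymm)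
    {d : ℕ} (φ φ' : EuclideanSpace ℝ (Fin n) →ₗ[ℝ] EuclideanSpace ℝ (Fin d))
    (t t' : EuclideanSpace ℝ (Fin d)) (ρ : ℝ) (hρ : 0 < ρ)
    (hQ1 : Metric.closedBall (0 : EuclideanSpace ℝ (Fin n)) 1 ⊆ {x | (A x + 1).PosSemidef})
    (hQ2 : {x : EuclideanSpace ℝ (Fin n) | (A x + 1).PosSemidef} ⊆ Metric.closedBall 0 n)
    (hQ1' : Metric.closedBall (0 : EuclideanSpace ℝ (Fin n)) 1 ⊆ {x | (A' x + 1).PosSemidef})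
    (hPρ : (fun x => φ x + t) '' {x | (A x + 1).PosSemidef} ⊆ Metric.closedBall 0 ρ) :
    ∀ p ∈ (fun x => φ x + t) '' {x | (A x + 1).PosSemidef},
      ∃ p' ∈ (fun x => φ' x + t') '' {x | (A' x + 1).PosSemidef},
        dist p p' ≤ ρ * n ^ 2 * lmNorm (A - A')
          + n * ‖LinearMap.toContinuousLinearMap (φ - φ')‖ + ‖t - t'‖ := by
  rintro p ⟨x, hx, rfl⟩
  set ε := lmNorm (A - A') with hε
  have hε0 : 0 ≤ ε := lmNorm_nonneg _
  have hxn : ‖x‖ ≤ n := by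
    have := hQ2 hx
    simpa [Metric.mem_closedBall, dist_zero_right] using this
  have hφx : ‖(φ - φ') x‖ ≤ n * ‖LinearMap.toContinuousLinearMap (φ - φ')‖ := by
    have h := (LinearMap.toContinuousLinearMap (φ - φ')).le_opNorm x
    rw [LinearMap.coe_toContinuousLinearMap'] at h
    calc ‖(φ - φ') x‖ ≤ ‖LinearMap.toContinuousLinearMap (φ - φ')‖ * ‖x‖ := h
      _ ≤ ‖LinearMap.toContinuousLinearMap (φ - φ')‖ * n :=
          mul_le_mul_of_nonneg_left hxn (norm_nonneg _)
      _ = n * ‖LinearMap.toContinuousLinearMap (φ - φ')‖ := mul_comm _ _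
  rcases le_or_gt (n : ℝ) 1 with hn1 | hn1
  · -- small n: x itself is in Q'
    have hxQ' : (A' x + 1).PosSemidef := hQ1' (by
      simpa [Metric.mem_closedBall, dist_zero_right] using hxn.trans hn1)
    refine ⟨φ' x + t', ⟨x, hxQ', rfl⟩, ?_⟩
    have hd : dist (φ x + t) (φ' x + t') ≤ ‖(φ - φ') x‖ + ‖t - t'‖ := by
      rw [dist_eq_norm]
      calc ‖φ x + t - (φ' x + t')‖ = ‖(φ - φ') x + (t - t')‖ := by
            rw [LinearMap.sub_apply]; congr 1; abel
        _ ≤ ‖(φ - φ') x‖ + ‖t - t'‖ := norm_add_le _ _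
    have hnn : 0 ≤ ρ * (n:ℝ) ^ 2 * ε :=
      mul_nonneg (mul_nonneg hρ.le (by positivity)) hε0
    linarith
  · -- n ≥ 2
    have hn2 : (2:ℝ) ≤ (n:ℝ) := by
      have h1 : 1 < n := by exact_mod_cast hn1
      have h2 : 2 ≤ n := h1
      exact_mod_cast h2
    set lam : ℝ := (1 + n * ε)⁻¹ with hlam
    have hden : (0:ℝ) < 1 + n * ε := by positivity
    have hlam0 : 0 < lam := inv_pos.mpr hden
    have hlamden : lam + lam * (n * ε) = 1 := by
      rw [hlam]; field_simp
    have hlam1 : lam ≤ 1 := by nlinarith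
    have h1lam : 1 - lam = lam * (n * ε) := by linarith
    -- λ • x belongs to Q'
    have hspec : specNorm (lam • ((A' - A) x)) ≤ 1 - lam := by
      rw [specNorm_smul, abs_of_nonneg hlam0.le]
      have hA : specNorm ((A' - A) x) ≤ ε * ‖x‖ := by
        have h := specNorm_apply_le (A - A') x
        rw [show ((A' - A) : _ →ₗ[ℝ] _) x = -((A - A') x) by simp, specNorm_neg]
        rw [mul_comm] at h ⊢
        exact h
      have hA2 : specNorm ((A' - A) x) ≤ ε * n := by
        calc specNorm ((A' - A) x) ≤ ε * ‖x‖ := hA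
          _ ≤ ε * n := mul_le_mul_of_nonneg_left hxn hε0
      rw [h1lam]
      calc lam * specNorm ((A' - A) x) ≤ lam * (ε * n) :=
            mul_le_mul_of_nonneg_left hA2 hlam0.le
        _ = lam * (n * ε) := by ring
    have hTsymm : (lam • ((A' - A) x)).IsSymm :=
      Matrix.IsSymm.smul (((hsymm' x).sub (hsymm x))) lam
    have hdecomp : A' (lam • x) + 1
        = lam • (A x + 1) + (lam • ((A' - A) x) + (1 - lam) • (1 : Matrix ι ι ℝ)) := by
      rw [map_smul, LinearMap.sub_apply]
      module
    have hyQ' : (A' (lam • x) + 1).PosSemidef := by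
      rw [hdecomp]
      exact psd_add (psd_smul hx hlam0.le) (psd_of_specNorm_le hTsymm hspec)
    refine ⟨φ' (lam • x) + t', ⟨lam • x, hyQ', rfl⟩, ?_⟩
    -- norm bounds
    have hpx : ‖φ x + t‖ ≤ ρ := by
      have := hPρ ⟨x, hx, rfl⟩
      simpa [Metric.mem_closedBall, dist_zero_right] using this
    have h0Q : (A 0 + 1).PosSemidef := hQ1 (by simp)
    have ht : ‖t‖ ≤ ρ := by
      have := hPρ ⟨0, h0Q, rfl⟩
      simpa [Metric.mem_closedBall, dist_zero_right, map_zero] using this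
    have hφ2ρ : ‖φ x‖ ≤ 2 * ρ := by
      have h := norm_sub_le (φ x + t) t
      rw [add_sub_cancel_right] at h
      linarith
    have hkey : φ x + t - (φ' (lam • x) + t')
        = (1 - lam) • φ x + lam • ((φ - φ') x) + (t - t') := by
      rw [map_smul, LinearMap.sub_apply]
      module
    rw [dist_eq_norm, hkey]
    have hb1 : ‖(1 - lam) • φ x‖ ≤ ρ * n ^ 2 * ε := by
      rw [norm_smul, Real.norm_eq_abs, abs_of_nonneg (by linarith : (0:ℝ) ≤ 1 - lam)]
      have : (1 - lam) * ‖φ x‖ ≤ (1 - lam) * (2 * ρ) :=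
        mul_le_mul_of_nonneg_left hφ2ρ (by linarith)
      rw [h1lam] at this ⊢
      have h2ln : 2 * lam ≤ (n:ℝ) := by linarith
      calc lam * ((n:ℝ) * ε) * ‖φ x‖ ≤ lam * ((n:ℝ) * ε) * (2 * ρ) := this
        _ = (2 * lam) * (ρ * (n:ℝ) * ε) := by ring
        _ ≤ (n:ℝ) * (ρ * (n:ℝ) * ε) := mul_le_mul_of_nonneg_right h2ln
            (mul_nonneg (mul_nonneg hρ.le (Nat.cast_nonneg n)) hε0)
        _ = ρ * (n:ℝ) ^ 2 * ε := by ring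
    have hb2 : ‖lam • ((φ - φ') x)‖ ≤ n * ‖LinearMap.toContinuousLinearMap (φ - φ')‖ := by
      rw [norm_smul, Real.norm_eq_abs, abs_of_nonneg hlam0.le]
      calc lam * ‖(φ - φ') x‖ ≤ 1 * ‖(φ - φ') x‖ :=
            mul_le_mul_of_nonneg_right hlam1 (norm_nonneg _)
        _ = ‖(φ - φ') x‖ := one_mul _
        _ ≤ _ := hφx
    calc ‖(1 - lam) • φ x + lam • ((φ - φ') x) + (t - t')‖
        ≤ ‖(1 - lam) • φ x‖ + ‖lam • ((φ - φ') x)‖ + ‖t - t'‖ :=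
          norm_add₃_le
      _ ≤ ρ * n ^ 2 * ε + n * ‖LinearMap.toContinuousLinearMap (φ - φ')‖ + ‖t - t'‖ := by
          gcongr

end Aux
theorem statement8 (n d l m : ℕ)
    (A A' : EuclideanSpace ℝ (Fin n) →ₗ[ℝ] Matrix (Fin m × Fin l) (Fin m × Fin l) ℝ)
    (hsymm : ∀ x, (A x).IsSymm) (hsymm' : ∀ x, (A' x).IsSymm)
    (hblock : ∀ x, ∃ f : Fin l → Matrix (Fin m) (Fin m) ℝ, A x = Matrix.blockDiagonal f)
    (hblock' : ∀ x, ∃ f : Fin l → Matrix (Fin m) (Fin m) ℝ, A' x = Matrix.blockDiagonal f)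
    (φ φ' : EuclideanSpace ℝ (Fin n) →ₗ[ℝ] EuclideanSpace ℝ (Fin d))
    (t t' : EuclideanSpace ℝ (Fin d)) (ρ : ℝ) (hρ : 0 < ρ)
    (hQ1 : Metric.closedBall (0 : EuclideanSpace ℝ (Fin n)) 1 ⊆ {x | (A x + 1).PosSemidef})
    (hQ2 : {x : EuclideanSpace ℝ (Fin n) | (A x + 1).PosSemidef} ⊆ Metric.closedBall 0 n)
    (hQ1' : Metric.closedBall (0 : EuclideanSpace ℝ (Fin n)) 1 ⊆ {x | (A' x + 1).PosSemidef})
    (hQ2' : {x : EuclideanSpace ℝ (Fin n) | (A' x + 1).PosSemidef} ⊆ Metric.closedBall 0 n)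
    (hPρ : (fun x => φ x + t) '' {x | (A x + 1).PosSemidef} ⊆ Metric.closedBall 0 ρ)
    (hPρ' : (fun x => φ' x + t') '' {x | (A' x + 1).PosSemidef} ⊆ Metric.closedBall 0 ρ) :
    Metric.hausdorffDist
        ((fun x => φ x + t) '' {x | (A x + 1).PosSemidef})
        ((fun x => φ' x + t') '' {x | (A' x + 1).PosSemidef})
      ≤ ρ * n ^ 2 * lmNorm (A - A') + n * ‖LinearMap.toContinuousLinearMap (φ - φ')‖
          + ‖t - t'‖ := by

  have key := oneSide A A' hsymm hsymm' φ φ' t t' ρ hρ hQ1 hQ2 hQ1' hPρ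
  have key' := oneSide A' A hsymm' hsymm φ' φ t' t ρ hρ hQ1' hQ2' hQ1 hPρ'
  have hswap : ρ * n ^ 2 * lmNorm (A' - A)
        + n * ‖LinearMap.toContinuousLinearMap (φ' - φ)‖ + ‖t' - t‖
      = ρ * n ^ 2 * lmNorm (A - A')
        + n * ‖LinearMap.toContinuousLinearMap (φ - φ')‖ + ‖t - t'‖ := by
    rw [lmNorm_sub_comm A' A, show φ' - φ = -(φ - φ') by abel, map_neg, norm_neg,
      norm_sub_rev]
  rw [hswap] at key'
  apply Metric.hausdorffDist_le_of_mem_dist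
  · have h1 : 0 ≤ ρ * (n:ℝ) ^ 2 * lmNorm (A - A') :=
      mul_nonneg (mul_nonneg hρ.le (by positivity)) (lmNorm_nonneg _)
    have h2 : (0:ℝ) ≤ n * ‖LinearMap.toContinuousLinearMap (φ - φ')‖ := by positivity
    linarith [norm_nonneg (t - t')]
  · exact key
  · exact key'
end
end

section
/- Let d ∈ ℕ and let P₁, P₂ ⊆ ℝ^d be two distinct non-empty 0/1-polytopes. Then dist(P₁, P₂) ≥ 1/√d. -/
open Metric Set

noncomputable section

open RealInnerProductSpace

lemma cube_norm_le {d : ℕ} (x : EuclideanSpace ℝ (Fin d))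
    (hx : ∀ i, x i = 0 ∨ x i = 1) : ‖x‖ ≤ Real.sqrt d := by
  rw [EuclideanSpace.norm_eq]
  apply Real.sqrt_le_sqrt
  calc ∑ i, ‖x i‖ ^ 2 ≤ ∑ _i : Fin d, 1 := by
        apply Finset.sum_le_sum
        intro i _
        rcases hx i with h | h <;> simp [h]
    _ = d := by simp

lemma poly_bounded {d : ℕ} {V : Set (EuclideanSpace ℝ (Fin d))}
    (hV : V ⊆ {x | ∀ i, x i = 0 ∨ x i = 1}) :
    Bornology.IsBounded (convexHull ℝ V) := by
  have hsub : convexHull ℝ V ⊆ Metric.closedBall 0 (Real.sqrt d) := by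
    apply convexHull_min _ (convex_closedBall _ _)
    intro x hx
    simpa [Metric.mem_closedBall, dist_eq_norm] using cube_norm_le x (hV hx)
  exact Metric.isBounded_closedBall.subset hsub

lemma key_dist {d : ℕ} {V : Set (EuclideanSpace ℝ (Fin d))}
    (hV : V ⊆ {x | ∀ i, x i = 0 ∨ x i = 1})
    {v : EuclideanSpace ℝ (Fin d)} (hv : ∀ i, v i = 0 ∨ v i = 1)
    (hvP : v ∉ convexHull ℝ V)
    {y : EuclideanSpace ℝ (Fin d)} (hy : y ∈ convexHull ℝ V) :
    1 / Real.sqrt d ≤ dist v y := by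
  rcases Nat.eq_zero_or_pos d with hd | hd
  · subst hd
    simp only [Nat.cast_zero, Real.sqrt_zero, div_zero]
    exact dist_nonneg
  have hdpos : (0 : ℝ) < Real.sqrt d := Real.sqrt_pos.2 (by exact_mod_cast hd)
  set a : EuclideanSpace ℝ (Fin d) := WithLp.toLp 2 (fun i => 2 * v i - 1) with ha
  have hna : ‖a‖ = Real.sqrt d := by
    rw [EuclideanSpace.norm_eq]
    congr 1
    calc ∑ i, ‖a i‖ ^ 2 = ∑ _i : Fin d, 1 := by
          apply Finset.sum_congr rfl
          intro i _
          rcases hv i with h | h <;>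
            simp only [ha, h, PiLp.toLp_apply] <;> norm_num
      _ = d := by simp
  set f : EuclideanSpace ℝ (Fin d) → ℝ := fun x => ∑ i, a i * x i with hf
  have hflin : IsLinearMap ℝ f := by
    constructor
    · intro x y
      simp [hf, mul_add, Finset.sum_add_distrib]
    · intro c x
      simp only [hf, PiLp.smul_apply, smul_eq_mul, Finset.mul_sum]
      apply Finset.sum_congr rfl
      intro i _
      ring
  -- per-vertex bound
  have hvert : ∀ w ∈ V, f w ≤ f v - 1 := by
    intro w hw
    have hwc : ∀ i, w i = 0 ∨ w i = 1 := hV hw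
    have hwne : w ≠ v := by
      rintro rfl
      exact hvP (subset_convexHull ℝ V hw)
    have h1 : (1 : ℝ) ≤ f v - f w := by
      have hsum : f v - f w = ∑ i, a i * (v i - w i) := by
        simp [hf, mul_sub, Finset.sum_sub_distrib]
      obtain ⟨i₀, hi₀⟩ := Function.ne_iff.1 (show w.ofLp ≠ v.ofLp from fun h => hwne (PiLp.ext (fun i => congrFun h i)))
      have hterm : ∀ i, 0 ≤ a i * (v i - w i) := by
        intro i
        rcases hv i with h | h <;> rcases hwc i with h' | h' <;>
          simp [ha, h, h'] <;> norm_num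
      have hterm0 : (1 : ℝ) ≤ a i₀ * (v i₀ - w i₀) := by
        rcases hv i₀ with h | h <;> rcases hwc i₀ with h' | h' <;>
          first
            | (exfalso; rw [h, h'] at hi₀; exact hi₀ rfl)
            | (norm_num [ha, h, h'])
      calc (1 : ℝ) ≤ a i₀ * (v i₀ - w i₀) := hterm0
        _ ≤ ∑ i, a i * (v i - w i) :=
            Finset.single_le_sum (fun i _ => hterm i) (Finset.mem_univ i₀)
        _ = f v - f w := hsum.symm
    linarith
  -- extend to the hull
  have hhull : f y ≤ f v - 1 :=
    convexHull_min hvert (convex_halfSpace_le hflin (f v - 1)) hy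
  -- Cauchy–Schwarz
  have hinner : f v - f y = (inner ℝ a (v - y) : ℝ) := by
    rw [PiLp.inner_apply]
    simp only [RCLike.inner_apply, starRingEnd_apply, star_trivial, PiLp.sub_apply]
    simp [hf, mul_sub, sub_mul, Finset.sum_sub_distrib, mul_comm]
  have hcs : (inner ℝ a (v - y) : ℝ) ≤ ‖a‖ * ‖v - y‖ := real_inner_le_norm a (v - y)
  have h2 : (1 : ℝ) ≤ Real.sqrt d * dist v y := by
    have : (1 : ℝ) ≤ f v - f y := by linarith
    rw [dist_eq_norm, ← hna]
    calc (1 : ℝ) ≤ f v - f y := this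
      _ = (inner ℝ a (v - y) : ℝ) := hinner
      _ ≤ ‖a‖ * ‖v - y‖ := hcs
  rw [div_le_iff₀ hdpos]
  linarith [h2, mul_comm (Real.sqrt d) (dist v y)]

theorem statement10 (d : ℕ) (P₁ P₂ : Set (EuclideanSpace ℝ (Fin d)))
    (h₁ : IsZeroOnePolytope P₁) (h₂ : IsZeroOnePolytope P₂)
    (hne₁ : P₁.Nonempty) (hne₂ : P₂.Nonempty) (hne : P₁ ≠ P₂) :
    1 / Real.sqrt d ≤ Metric.hausdorffDist P₁ P₂ := by
  obtain ⟨V₁, hV₁, hP₁⟩ := h₁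
  obtain ⟨V₂, hV₂, hP₂⟩ := h₂
  have hb₁ : Bornology.IsBounded P₁ := hP₁ ▸ poly_bounded hV₁
  have hb₂ : Bornology.IsBounded P₂ := hP₂ ▸ poly_bounded hV₂
  have hedist : EMetric.hausdorffEdist P₁ P₂ ≠ ⊤ :=
    Metric.hausdorffEdist_ne_top_of_nonempty_of_bounded hne₁ hne₂ hb₁ hb₂
  have hcases : (∃ v ∈ V₁, v ∉ P₂) ∨ (∃ v ∈ V₂, v ∉ P₁) := by
    by_contra h
    push_neg at h
    apply hne
    apply Set.Subset.antisymm
    · rw [hP₁]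
      exact convexHull_min (fun w hw => h.1 w hw) (hP₂ ▸ convex_convexHull ℝ V₂)
    · rw [hP₂]
      exact convexHull_min (fun w hw => h.2 w hw) (hP₁ ▸ convex_convexHull ℝ V₁)
  have haux : ∀ (V W : Set (EuclideanSpace ℝ (Fin d))),
      V ⊆ {x | ∀ i, x i = 0 ∨ x i = 1} → W ⊆ {x | ∀ i, x i = 0 ∨ x i = 1} →
      (convexHull ℝ W).Nonempty →
      EMetric.hausdorffEdist (convexHull ℝ V) (convexHull ℝ W) ≠ ⊤ →
      (∃ v ∈ V, v ∉ convexHull ℝ W) →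
      1 / Real.sqrt d ≤ Metric.hausdorffDist (convexHull ℝ V) (convexHull ℝ W) := by
    intro V W hVc hWc hWne hed ⟨v, hvV, hvW⟩
    have hinf : 1 / Real.sqrt d ≤ Metric.infDist v (convexHull ℝ W) := by
      rw [Metric.infDist_eq_iInf]
      have : Nonempty (convexHull ℝ W : Set (EuclideanSpace ℝ (Fin d))) := hWne.to_subtype
      exact le_ciInf fun y => key_dist hWc (hVc hvV) hvW y.2
    exact hinf.trans
      (Metric.infDist_le_hausdorffDist_of_mem (subset_convexHull ℝ V hvV) hed)
  rcases hcases with ⟨v, hv, hvP⟩ | ⟨v, hv, hvP⟩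
  · rw [hP₁, hP₂]
    exact haux V₁ V₂ hV₁ hV₂ (hP₂ ▸ hne₂) (hP₁ ▸ hP₂ ▸ hedist) ⟨v, hv, hP₂ ▸ hvP⟩
  · rw [Metric.hausdorffDist_comm, hP₁, hP₂]
    exact haux V₂ V₁ hV₂ hV₁ (hP₁ ▸ hne₁)
      (by rw [EMetric.hausdorffEdist, hausdorffEDist_comm]; exact hP₁ ▸ hP₂ ▸ hedist)
      ⟨v, hv, hP₁ ▸ hvP⟩
end
end

section
/- Let s ∈ ℕ and for each nonempty I ⊆ [s] := {1,…,s} let P_I := conv({(t, t²) : t ∈ I}) ⊆ ℝ². Then for all nonempty I, J ⊆ [s] with I ≠ J one has dist(P_I, P_J) ≥ 1/(3s). -/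
open Metric Set

noncomputable section

private lemma coord_abs_le_norm (d : EuclideanSpace ℝ (Fin 2)) (i : Fin 2) : |d i| ≤ ‖d‖ := by
  rw [EuclideanSpace.norm_eq]
  have : |d i| = Real.sqrt (‖d i‖ ^ 2) := by
    rw [Real.sqrt_sq_eq_abs]; simp
  rw [this]
  apply Real.sqrt_le_sqrt
  exact Finset.single_le_sum (f := fun j => ‖d j‖ ^ 2) (fun j _ => by positivity) (Finset.mem_univ i)

private lemma key_lemma_s15 (s t : ℕ) (ht1 : 1 ≤ t) (hts : t ≤ s) (J : Finset ℕ)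
    (hJne : J.Nonempty) (htJ : t ∉ J)
    (hJbd : ∀ u ∈ J, 1 ≤ u) :
    ∀ y ∈ convexHull ℝ
      ((fun u : ℕ => (EuclideanSpace.equiv (Fin 2) ℝ).symm ![(u : ℝ), (u : ℝ) ^ 2]) '' J),
      1 / (3 * (s : ℝ)) ≤
        dist ((EuclideanSpace.equiv (Fin 2) ℝ).symm ![(t : ℝ), (t : ℝ) ^ 2]) y := by
  intro y hy
  set x : EuclideanSpace ℝ (Fin 2) := (EuclideanSpace.equiv (Fin 2) ℝ).symm ![(t : ℝ), (t : ℝ) ^ 2]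
  -- linear functional L z = z 1 - 2t z 0
  set L : EuclideanSpace ℝ (Fin 2) → ℝ := fun z => z 1 - 2 * (t : ℝ) * z 0 with hL
  have hlin : IsLinearMap ℝ L := by
    constructor
    · intro a b; simp [hL, PiLp.add_apply]; ring
    · intro c a; simp [hL, PiLp.smul_apply, smul_eq_mul]; ring
  -- on the hull, L ≥ 1 - t^2
  have hsep : (1 : ℝ) - (t : ℝ) ^ 2 ≤ L y := by
    have hconv : Convex ℝ {w : EuclideanSpace ℝ (Fin 2) | (1 : ℝ) - (t : ℝ) ^ 2 ≤ L w} :=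
      convex_halfSpace_ge hlin _
    have hsub : (fun u : ℕ => (EuclideanSpace.equiv (Fin 2) ℝ).symm ![(u : ℝ), (u : ℝ) ^ 2]) '' J
        ⊆ {w : EuclideanSpace ℝ (Fin 2) | (1 : ℝ) - (t : ℝ) ^ 2 ≤ L w} := by
      rintro _ ⟨u, hu, rfl⟩
      have hune : (u : ℝ) ≠ (t : ℝ) := by
        simp only [Ne, Nat.cast_inj]
        rintro rfl; exact htJ hu
      have h1 : (1 : ℝ) ≤ ((u : ℝ) - t) ^ 2 := by
        have habs : (1 : ℝ) ≤ |(u : ℝ) - t| := by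
          have hne' : (u : ℤ) ≠ (t : ℤ) := by exact_mod_cast hune
          have h2 : (1 : ℤ) ≤ |(u : ℤ) - t| := by rw [le_abs]; omega
          have h3 : ((|(u : ℤ) - t| : ℤ) : ℝ) = |(u : ℝ) - t| := by push_cast; ring_nf
          calc (1 : ℝ) ≤ ((|(u : ℤ) - t| : ℤ) : ℝ) := by exact_mod_cast h2
            _ = |(u : ℝ) - t| := h3
        rw [← sq_abs]
        nlinarith [abs_nonneg ((u : ℝ) - t)]
      simp only [mem_setOf_eq, hL]
      have : ((EuclideanSpace.equiv (Fin 2) ℝ).symm ![(u : ℝ), (u : ℝ) ^ 2] : EuclideanSpace ℝ (Fin 2)) 1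
          = (u : ℝ) ^ 2 := rfl
      rw [this]
      have h0 : ((EuclideanSpace.equiv (Fin 2) ℝ).symm ![(u : ℝ), (u : ℝ) ^ 2] : EuclideanSpace ℝ (Fin 2)) 0
          = (u : ℝ) := rfl
      rw [h0]; nlinarith [h1]
    exact convexHull_min hsub hconv hy
  have hLx : L x = -(t : ℝ) ^ 2 := by
    have h0 : x 0 = (t : ℝ) := rfl
    have h1 : x 1 = (t : ℝ) ^ 2 := rfl
    simp [hL, h0, h1]; ring
  -- L y - L x ≥ 1, and L is (1+2t)-Lipschitz
  have hgap : (1 : ℝ) ≤ L y - L x := by rw [hLx]; linarith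
  have hLip : L y - L x ≤ (1 + 2 * (t : ℝ)) * dist x y := by
    have hd : L y - L x = L (y - x) := by
      have := hlin.map_add (y - x) x
      simp at this
      linarith [this]
    rw [hd, hL]
    have h0 : |(y - x) 0| ≤ ‖y - x‖ := coord_abs_le_norm _ 0
    have h1 : |(y - x) 1| ≤ ‖y - x‖ := coord_abs_le_norm _ 1
    have hdist : dist x y = ‖y - x‖ := by rw [dist_comm, dist_eq_norm]
    rw [hdist]
    have ht0 : (0 : ℝ) ≤ 2 * t := by positivity
    calc (y - x) 1 - 2 * (t : ℝ) * (y - x) 0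
        ≤ |(y - x) 1| + 2 * t * |(y - x) 0| := by
          have := abs_nonneg ((y-x) 0)
          have := le_abs_self ((y-x) 1)
          have := neg_abs_le ((y-x) 0)
          nlinarith
      _ ≤ ‖y - x‖ + 2 * t * ‖y - x‖ := by nlinarith
      _ = (1 + 2 * (t : ℝ)) * ‖y - x‖ := by ring
  have hs1 : (1 : ℕ) ≤ s := le_trans ht1 hts
  have h3s : (0 : ℝ) < 3 * s := by positivity
  have hb : (1 + 2 * (t : ℝ)) ≤ 3 * s := by
    have : (t : ℝ) ≤ s := by exact_mod_cast hts
    have : (1 : ℝ) ≤ s := by exact_mod_cast hs1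
    nlinarith
  have hdn : (0 : ℝ) ≤ dist x y := dist_nonneg
  rw [div_le_iff₀ h3s]
  nlinarith

private lemma key_haus (s : ℕ) (I J : Finset ℕ)
    (hI : I ⊆ Finset.Icc 1 s) (hJ : J ⊆ Finset.Icc 1 s)
    (hJne : J.Nonempty) (t : ℕ) (htI : t ∈ I) (htJ : t ∉ J) :
    1 / (3 * (s : ℝ)) ≤ Metric.hausdorffDist
      (convexHull ℝ
        ((fun t : ℕ => (EuclideanSpace.equiv (Fin 2) ℝ).symm ![(t : ℝ), (t : ℝ) ^ 2]) '' I))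
      (convexHull ℝ
        ((fun t : ℕ => (EuclideanSpace.equiv (Fin 2) ℝ).symm ![(t : ℝ), (t : ℝ) ^ 2]) '' J)) := by
  set f : ℕ → EuclideanSpace ℝ (Fin 2) :=
    fun t : ℕ => (EuclideanSpace.equiv (Fin 2) ℝ).symm ![(t : ℝ), (t : ℝ) ^ 2] with hf
  have ht1 : 1 ≤ t := (Finset.mem_Icc.mp (hI htI)).1
  have hts : t ≤ s := (Finset.mem_Icc.mp (hI htI)).2
  have hbdJ : ∀ u ∈ J, 1 ≤ u := fun u hu => (Finset.mem_Icc.mp (hJ hu)).1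
  have hPne : (convexHull ℝ (f '' I)).Nonempty :=
    ⟨f t, subset_convexHull ℝ _ ⟨t, htI, rfl⟩⟩
  have hQne : (convexHull ℝ (f '' J)).Nonempty := by
    obtain ⟨u, hu⟩ := hJne
    exact ⟨f u, subset_convexHull ℝ _ ⟨u, hu, rfl⟩⟩
  have hPb : Bornology.IsBounded (convexHull ℝ (f '' I)) :=
    ((I.finite_toSet.image f).isCompact_convexHull (𝕜 := ℝ)).isBounded
  have hQb : Bornology.IsBounded (convexHull ℝ (f '' J)) :=
    ((J.finite_toSet.image f).isCompact_convexHull (𝕜 := ℝ)).isBounded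
  have hfin : EMetric.hausdorffEdist (convexHull ℝ (f '' I)) (convexHull ℝ (f '' J)) ≠ ⊤ :=
    Metric.hausdorffEdist_ne_top_of_nonempty_of_bounded hPne hQne hPb hQb
  have hxmem : f t ∈ convexHull ℝ (f '' I) := subset_convexHull ℝ _ ⟨t, htI, rfl⟩
  have h1 : Metric.infDist (f t) (convexHull ℝ (f '' J)) ≤
      Metric.hausdorffDist (convexHull ℝ (f '' I)) (convexHull ℝ (f '' J)) :=
    Metric.infDist_le_hausdorffDist_of_mem hxmem hfin
  have h2 : 1 / (3 * (s : ℝ)) ≤ Metric.infDist (f t) (convexHull ℝ (f '' J)) := by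
    by_contra h
    push_neg at h
    obtain ⟨y, hy, hlt⟩ := (Metric.infDist_lt_iff hQne).mp h
    exact absurd hlt (not_lt.mpr (key_lemma_s15 s t ht1 hts J hJne htJ hbdJ y hy))
  linarith

theorem statement15 (s : ℕ) (I J : Finset ℕ)
    (hI : I ⊆ Finset.Icc 1 s) (hJ : J ⊆ Finset.Icc 1 s)
    (hIne : I.Nonempty) (hJne : J.Nonempty) (hIJ : I ≠ J) :
    1 / (3 * (s : ℝ)) ≤ Metric.hausdorffDist
      (convexHull ℝ
        ((fun t : ℕ => (EuclideanSpace.equiv (Fin 2) ℝ).symm ![(t : ℝ), (t : ℝ) ^ 2]) '' I))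
      (convexHull ℝ
        ((fun t : ℕ => (EuclideanSpace.equiv (Fin 2) ℝ).symm ![(t : ℝ), (t : ℝ) ^ 2]) '' J)) := by
  by_cases h : ∃ t, t ∈ I ∧ t ∉ J
  · obtain ⟨t, htI, htJ⟩ := h
    exact key_haus s I J hI hJ hJne t htI htJ
  · push_neg at h
    have : ∃ t, t ∈ J ∧ t ∉ I := by
      by_contra h2
      push_neg at h2
      exact hIJ (Finset.Subset.antisymm (fun x hx => h x hx) (fun x hx => h2 x hx))
    obtain ⟨t, htJ, htI⟩ := this
    rw [Metric.hausdorffDist_comm]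
    exact key_haus s J I hJ hI hIne t htJ htI
end
end

section
/- For every d ∈ ℕ with d ≥ 4 and every 0/1-polytope P in ℝ^d, one has xc(P) ≤ 9·2^d/d. -/
open Metric Set

noncomputable section

section Aux
open Finset
open Classical
set_option maxHeartbeats 1600000

namespace S18

variable {ι : Type*} [Fintype ι]

def lfun (c : ι → ℝ) (t : ℝ) : (ι → ℝ) →ᵃ[ℝ] ℝ where
  toFun := fun y => (∑ i, c i * y i) + t
  linear := ∑ i, c i • (LinearMap.proj i : (ι → ℝ) →ₗ[ℝ] ℝ)
  map_vadd' := by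
    intro p v
    simp only [LinearMap.sum_apply, LinearMap.smul_apply, LinearMap.proj_apply, smul_eq_mul,
      vadd_eq_add, Pi.add_apply]
    have : ∀ x : ι, c x * (v x + p x) = c x * v x + c x * p x := fun x => by ring
    simp only [this, Finset.sum_add_distrib]
    ring

@[simp] lemma lfun_apply (c : ι → ℝ) (t : ℝ) (y : ι → ℝ) :
    lfun c t y = (∑ i, c i * y i) + t := rfl

def cmap {E : Type*} [AddCommGroup E] [Module ℝ E] (vec : ι → E) : (ι → ℝ) →ᵃ[ℝ] E where
  toFun := fun y => ∑ i, y i • vec i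
  linear := ∑ i, (LinearMap.proj i : (ι → ℝ) →ₗ[ℝ] ℝ).smulRight (vec i)
  map_vadd' := by
    intro p v
    simp only [LinearMap.sum_apply, LinearMap.smulRight_apply, LinearMap.proj_apply,
      vadd_eq_add, Pi.add_apply, add_smul]
    rw [← Finset.sum_add_distrib]

@[simp] lemma cmap_apply {E : Type*} [AddCommGroup E] [Module ℝ E] (vec : ι → E) (y : ι → ℝ) :
    cmap vec y = ∑ i, y i • vec i := rfl

def bval (b : Bool) : ℝ := if b then 1 else 0

variable {d : ℕ} (k : ℕ)

def lvec (b : Fin k → Bool) : EuclideanSpace ℝ (Fin d) :=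
  WithLp.toLp 2 fun (i : Fin d) => if h : (i : ℕ) < k then bval (b ⟨i, h⟩) else 0

def rvec (w : Fin (d - k) → Bool) : EuclideanSpace ℝ (Fin d) :=
  WithLp.toLp 2 fun (i : Fin d) => if h : (i : ℕ) < k then 0 else bval (w ⟨i - k, by have := i.isLt; omega⟩)

def pt (b : Fin k → Bool) (w : Fin (d - k) → Bool) : EuclideanSpace ℝ (Fin d) :=
  lvec k b + rvec k w

lemma pt_apply_lt (b : Fin k → Bool) (w) (i : Fin d) (h : (i:ℕ) < k) :
    pt k b w i = bval (b ⟨i, h⟩) := by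
  simp [pt, lvec, rvec, PiLp.add_apply, h]

lemma pt_apply_ge (b : Fin k → Bool) (w) (i : Fin d) (h : ¬ (i:ℕ) < k) :
    pt k b w i = bval (w ⟨i - k, by have := i.isLt; omega⟩) := by
  simp [pt, lvec, rvec, PiLp.add_apply, h]

variable (V : Set (EuclideanSpace ℝ (Fin d)))

def sec (w : Fin (d - k) → Bool) : (Fin k → Bool) → Bool :=
  fun b => if pt k b w ∈ V then true else false

lemma sec_true {w b} : sec k V w b = true ↔ pt k b w ∈ V := by
  simp [sec]

/-- variable index type -/
abbrev II (d k : ℕ) : Type :=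
  (((Fin k → Bool) → Bool) × (Fin k → Bool)) ⊕ (Fin (d - k) → Bool)

/-- constraint index type -/
abbrev JJ (d k : ℕ) : Type :=
  (((Fin k → Bool) → Bool) × (Fin k → Bool)) ⊕
    ((((Fin k → Bool) → Bool) × (Fin k → Bool)) ⊕
      ((Fin (d - k) → Bool) ⊕ ((((Fin k → Bool) → Bool) × Bool) ⊕ Bool)))

def phiMap : ((II d k) → ℝ) →ᵃ[ℝ] EuclideanSpace ℝ (Fin d) :=
  cmap (fun idx => match idx with
    | .inl p => lvec k p.2
    | .inr w => rvec k w)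

def sgn (s : Bool) : ℝ := if s then 1 else -1

def aMap : JJ d k → (((II d k) → ℝ) →ᵃ[ℝ] ℝ)
  | .inl p => lfun (fun idx => if idx = .inl p then 1 else 0) 0
  | .inr (.inl p) => lfun (fun idx => if p.1 p.2 = false ∧ idx = .inl p then -1 else 0) 0
  | .inr (.inr (.inl w)) => lfun (fun idx => if idx = .inr w then 1 else 0) 0
  | .inr (.inr (.inr (.inl (S, s)))) =>
      lfun (fun idx => sgn s * (match idx with
        | .inl p => if p.1 = S then 1 else 0
        | .inr w => if sec k V w = S then -1 else 0)) 0
  | .inr (.inr (.inr (.inr s))) =>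
      lfun (fun idx => match idx with
        | .inl _ => 0
        | .inr _ => sgn s) (-(sgn s))

lemma sum_indicator_mul {ι : Type*} [Fintype ι] (i₀ : ι) (y : ι → ℝ) :
    (∑ i, (if i = i₀ then (1:ℝ) else 0) * y i) = y i₀ := by
  rw [Finset.sum_eq_single i₀] <;> simp +contextual


lemma aMap1_apply (p : ((Fin k → Bool) → Bool) × (Fin k → Bool)) (y : II d k → ℝ) :
    aMap k V (.inl p) y = y (.inl p) := by
  simp only [aMap, lfun_apply, add_zero]
  rw [Finset.sum_eq_single (Sum.inl p : II d k) (by intro b _ hb; simp [hb]) (by simp)]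
  simp

lemma aMap2_apply (p : ((Fin k → Bool) → Bool) × (Fin k → Bool)) (y : II d k → ℝ) :
    aMap k V (.inr (.inl p)) y = if p.1 p.2 = false then -(y (.inl p)) else 0 := by
  simp only [aMap, lfun_apply, add_zero]
  by_cases h : p.1 p.2 = false
  · simp only [h, true_and]
    rw [Finset.sum_eq_single (Sum.inl p : II d k) (by intro b _ hb; simp [hb]) (by simp)]
    simp
  · simp [h]

lemma aMap3_apply (w : Fin (d - k) → Bool) (y : II d k → ℝ) :
    aMap k V (.inr (.inr (.inl w))) y = y (.inr w) := by
  simp only [aMap, lfun_apply, add_zero]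
  rw [Finset.sum_eq_single (Sum.inr w : II d k) (by intro b _ hb; simp [hb]) (by simp)]
  simp

lemma aMap4_apply (S s) (y : II d k → ℝ) :
    aMap k V (.inr (.inr (.inr (.inl (S, s))))) y
      = sgn s * ((∑ b, y (.inl (S, b))) - ∑ w, (if sec k V w = S then y (.inr w) else 0)) := by
  simp only [aMap, lfun_apply, add_zero, mul_assoc]
  rw [← Finset.mul_sum]
  congr 1
  rw [Fintype.sum_sum_type, Fintype.sum_prod_type]
  have h1 : ∀ a, (∑ b, (if a = S then (1:ℝ) else 0) * y (.inl (a, b)))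
      = (if a = S then (1:ℝ) else 0) * ∑ b, y (.inl (a, b)) := fun a => by
    rw [Finset.mul_sum]
  have h2 : ∀ w, (if sec k V w = S then (-1:ℝ) else 0) * y (.inr w)
      = -(if sec k V w = S then y (.inr w) else 0) := fun w => by
    by_cases h : sec k V w = S <;> simp [h]
  simp only [h1, h2]
  rw [Finset.sum_eq_single S (by intro b _ hb; simp [hb]) (by simp)]
  simp
  ring


lemma aMap5_apply (s) (y : II d k → ℝ) :
    aMap k V (.inr (.inr (.inr (.inr s)))) y = sgn s * ((∑ w, y (.inr w)) - 1) := by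
  simp only [aMap, lfun_apply]
  rw [Fintype.sum_sum_type]
  simp only [zero_mul, Finset.sum_const_zero, zero_add]
  rw [← Finset.mul_sum]
  ring

/-- feasibility region -/
def Feas : Set ((II d k) → ℝ) := {y | ∀ j : JJ d k, 0 ≤ aMap k V j y}

lemma feas_iff (y : II d k → ℝ) :
    y ∈ Feas k V ↔
      (∀ p : ((Fin k → Bool) → Bool) × (Fin k → Bool), 0 ≤ y (.inl p)) ∧
      (∀ p : ((Fin k → Bool) → Bool) × (Fin k → Bool), p.1 p.2 = false → y (.inl p) = 0) ∧
      (∀ w : Fin (d - k) → Bool, 0 ≤ y (.inr w)) ∧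
      (∀ S : (Fin k → Bool) → Bool,
        (∑ b, y (.inl (S, b))) = ∑ w, (if sec k V w = S then y (.inr w) else 0)) ∧
      (∑ w, y (.inr w)) = 1 := by
  constructor
  · intro h
    refine ⟨fun p => ?_, fun p hp => ?_, fun w => ?_, fun S => ?_, ?_⟩
    · have := h (.inl p); rwa [aMap1_apply] at this
    · have h1 := h (.inl p); rw [aMap1_apply] at h1
      have h2 := h (.inr (.inl p)); rw [aMap2_apply, if_pos hp] at h2
      linarith
    · have := h (.inr (.inr (.inl w))); rwa [aMap3_apply] at this
    · have h1 := h (.inr (.inr (.inr (.inl (S, true)))))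
      have h2 := h (.inr (.inr (.inr (.inl (S, false)))))
      rw [aMap4_apply] at h1 h2
      simp only [sgn] at h1 h2
      norm_num at h1 h2
      linarith
    · have h1 := h (.inr (.inr (.inr (.inr true))))
      have h2 := h (.inr (.inr (.inr (.inr false))))
      rw [aMap5_apply] at h1 h2
      simp only [sgn] at h1 h2
      norm_num at h1 h2
      linarith
  · rintro ⟨h1, h2, h3, h4, h5⟩ j
    match j with
    | .inl p => rw [aMap1_apply]; exact h1 p
    | .inr (.inl p) =>
      rw [aMap2_apply]
      by_cases hp : p.1 p.2 = false
      · rw [if_pos hp, h2 p hp]; simp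
      · rw [if_neg hp]
    | .inr (.inr (.inl w)) => rw [aMap3_apply]; exact h3 w
    | .inr (.inr (.inr (.inl (S, s)))) =>
      rw [aMap4_apply, h4 S, sub_self, mul_zero]
    | .inr (.inr (.inr (.inr s))) =>
      rw [aMap5_apply, h5, sub_self, mul_zero]

lemma phi_eq (y : II d k → ℝ) :
    phiMap k y = (∑ S : (Fin k → Bool) → Bool, ∑ b, y (.inl (S, b)) • lvec k b)
      + ∑ w, y (.inr w) • rvec k w := by
  show (∑ idx : II d k, y idx • _) = _
  rw [Fintype.sum_sum_type, Fintype.sum_prod_type]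

lemma image_subset_hull (hne : V.Nonempty) :
    ⇑(phiMap k (d := d)) '' Feas k V ⊆ convexHull ℝ V := by
  rintro _ ⟨y, hy, rfl⟩
  rw [feas_iff] at hy
  obtain ⟨h1, h2, h3, h4, h5⟩ := hy
  obtain ⟨v₀, hv₀⟩ := hne
  set nn : (Fin (d - k) → Bool) → ℝ := fun w => y (.inr w) with hnn
  set l : ((Fin k → Bool) → Bool) → ℝ :=
    fun S => ∑ w, (if sec k V w = S then nn w else 0) with hl
  set L : ((Fin k → Bool) → Bool) → EuclideanSpace ℝ (Fin d) :=
    fun S => ∑ b, y (.inl (S, b)) • lvec k b with hL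
  have lam_nonneg : ∀ S, 0 ≤ l S := fun S =>
    Finset.sum_nonneg fun w _ => by by_cases h : sec k V w = S <;> simp [h, hnn, h3 w]
  have hml : ∀ S, (∑ b, y (.inl (S, b))) = l S := fun S => h4 S
  have m_zero : ∀ S, l S = 0 → ∀ b, y (.inl (S, b)) = 0 := by
    intro S hS b
    have := (Finset.sum_eq_zero_iff_of_nonneg (fun b _ => h1 (S, b))).1 ((hml S).trans hS)
    exact this b (Finset.mem_univ b)
  have L_zero : ∀ S, l S = 0 → L S = 0 := by
    intro S hS
    rw [hL]
    exact Finset.sum_eq_zero fun b _ => by rw [m_zero S hS b, zero_smul]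
  set p : (Fin (d - k) → Bool) → EuclideanSpace ℝ (Fin d) :=
    fun w => if nn w = 0 then v₀ else (l (sec k V w))⁻¹ • L (sec k V w) + rvec k w with hp
  -- the image point as a convex combination
  have key : phiMap k y = ∑ w, nn w • p w := by
    have claimA : ∀ w, nn w • p w
        = nn w • ((l (sec k V w))⁻¹ • L (sec k V w) + rvec k w) := by
      intro w
      by_cases h : nn w = 0
      · rw [h, zero_smul, zero_smul]
      · rw [hp]; simp only [if_neg h]
    have claimB : (∑ w, nn w • ((l (sec k V w))⁻¹ • L (sec k V w)))
        = ∑ S, L S := by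
      have step1 : ∀ w, nn w • ((l (sec k V w))⁻¹ • L (sec k V w))
          = ∑ S, (if sec k V w = S then nn w else 0) • ((l S)⁻¹ • L S) := by
        intro w
        rw [Finset.sum_eq_single (sec k V w) (fun S _ hS => by rw [if_neg (Ne.symm (Ne.symm ?_)), zero_smul]; exact fun hc => hS (hc ▸ rfl)) (by simp)]
        rw [if_pos rfl]
      simp only [step1]
      rw [Finset.sum_comm]
      have step2 : ∀ S, (∑ w, (if sec k V w = S then nn w else 0) • ((l S)⁻¹ • L S))
          = l S • ((l S)⁻¹ • L S) := by
        intro S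
        rw [← Finset.sum_smul]
      simp only [step2]
      apply Finset.sum_congr rfl
      intro S _
      by_cases h : l S = 0
      · rw [h, L_zero S h]; simp
      · rw [smul_smul, mul_inv_cancel₀ h, one_smul]
    calc phiMap k y = (∑ S, L S) + ∑ w, nn w • rvec k w := phi_eq k y
      _ = (∑ w, nn w • ((l (sec k V w))⁻¹ • L (sec k V w))) + ∑ w, nn w • rvec k w := by
          rw [claimB]
      _ = ∑ w, (nn w • ((l (sec k V w))⁻¹ • L (sec k V w)) + nn w • rvec k w) := by
          rw [Finset.sum_add_distrib]
      _ = ∑ w, nn w • p w := by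
          apply Finset.sum_congr rfl
          intro w _
          rw [claimA w, smul_add]
  rw [key]
  -- now show each p w is in the hull
  have pmem : ∀ w, p w ∈ convexHull ℝ V := by
    intro w
    by_cases h : nn w = 0
    · rw [hp]; simp only [if_pos h]
      exact subset_convexHull ℝ V hv₀
    · rw [hp]; simp only [if_neg h]
      set S := sec k V w with hS
      have hlpos : 0 < l S := by
        have hge : nn w ≤ l S := by
          refine Finset.single_le_sum (f := fun w' => if sec k V w' = S then nn w' else 0)
            (fun w' _ => by by_cases hc : sec k V w' = S <;> simp [hc, hnn, h3 w']) (Finset.mem_univ w) |>.trans_eq' ?_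
          rw [if_pos rfl]
        have : 0 < nn w := lt_of_le_of_ne (h3 w) (Ne.symm h)
        linarith
      set c : (Fin k → Bool) → ℝ := fun b => (l S)⁻¹ * y (.inl (S, b)) with hc
      have hcsum : ∑ b, c b = 1 := by
        rw [hc]
        simp only
        rw [← Finset.mul_sum, hml S, inv_mul_cancel₀ (ne_of_gt hlpos)]
      have hrepr : (l S)⁻¹ • L S + rvec k w = ∑ b, c b • pt k b w := by
        have : ∀ b, c b • pt k b w = c b • lvec k b + c b • rvec k w := fun b => by
          rw [pt, smul_add]
        simp only [this, Finset.sum_add_distrib, ← Finset.sum_smul, hcsum, one_smul]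
        congr 1
        rw [hL, Finset.smul_sum]
        apply Finset.sum_congr rfl
        intro b _
        rw [smul_smul]
      rw [hrepr]
      set z : (Fin k → Bool) → EuclideanSpace ℝ (Fin d) := fun b => if y (.inl (S, b)) = 0 then v₀ else pt k b w with hz
      have hzval : ∀ b, c b • z b = c b • pt k b w := by
        intro b
        by_cases hb : y (.inl (S, b)) = 0
        · have : c b = 0 := by rw [hc]; simp [hb]
          rw [this, zero_smul, zero_smul]
        · rw [hz]; simp only [if_neg hb]
      rw [← Finset.sum_congr rfl fun b _ => hzval b]
      refine (convex_convexHull ℝ V).sum_mem (fun b _ => ?_) hcsum (fun b _ => ?_)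
      · exact mul_nonneg (inv_nonneg.2 hlpos.le) (h1 (S, b))
      · rw [hz]
        by_cases hb : y (.inl (S, b)) = 0
        · simp only [if_pos hb]; exact subset_convexHull ℝ V hv₀
        · simp only [if_neg hb]
          apply subset_convexHull ℝ V
          rw [← sec_true (k := k) (V := V)]
          rcases Bool.eq_false_or_eq_true (S b) with htb | hfb
          · exact htb
          · exact absurd (h2 (S, b) hfb) hb
  exact (convex_convexHull ℝ V).sum_mem (fun w _ => h3 w) h5 (fun w _ => pmem w)

lemma phi_eq2 (y : II d k → ℝ) :
    phiMap k y = (∑ p : ((Fin k → Bool) → Bool) × (Fin k → Bool), y (.inl p) • lvec k p.2)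
      + ∑ w, y (.inr w) • rvec k w := by
  show (∑ idx : II d k, y idx • _) = _
  rw [Fintype.sum_sum_type]

lemma feas_convex : Convex ℝ (Feas k V) := by
  have : Feas k V = ⋂ j : JJ d k, (⇑(aMap k V j)) ⁻¹' (Set.Ici (0:ℝ)) := by
    ext y
    simp [Feas, Set.mem_iInter]
  rw [this]
  exact convex_iInter fun j => (convex_Ici 0).affine_preimage _

lemma hull_subset_image (hk : k ≤ d) (hV : V ⊆ {x | ∀ i, x i = 0 ∨ x i = 1}) :
    convexHull ℝ V ⊆ ⇑(phiMap k (d := d)) '' Feas k V := by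
  apply convexHull_min ?_ ((feas_convex k V).affine_image _)
  intro v hv
  set b : Fin k → Bool := fun j => if v ⟨j, lt_of_lt_of_le j.2 hk⟩ = 1 then true else false with hb
  set w : Fin (d - k) → Bool :=
    fun j => if v ⟨k + j, by have := j.isLt; omega⟩ = 1 then true else false with hw
  have hpt : pt k b w = v := by
    apply PiLp.ext; intro i
    by_cases hi : (i : ℕ) < k
    · rw [pt_apply_lt k b w i hi, hb]
      simp only [bval]
      have e1 : v ⟨(⟨(i : ℕ), hi⟩ : Fin k), lt_of_lt_of_le (⟨(i : ℕ), hi⟩ : Fin k).2 hk⟩ = v i :=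
        congrArg v (Fin.ext rfl)
      simp only [e1]
      rcases hV hv i with h0 | h1
      · rw [h0]; norm_num
      · rw [h1]; norm_num
    · rw [pt_apply_ge k b w i hi, hw]
      simp only [bval]
      have e1 : v ⟨k + ((i : ℕ) - k), by have := i.isLt; omega⟩ = v i :=
        congrArg v (Fin.ext (show k + ((i : ℕ) - k) = (i : ℕ) by omega))
      simp only [e1]
      rcases hV hv i with h0 | h1
      · rw [h0]; norm_num
      · rw [h1]; norm_num
  have hbw : sec k V w b = true := by rw [sec_true, hpt]; exact hv
  set y₀ : II d k → ℝ := fun idx => match idx with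
    | .inl q => if q = (sec k V w, b) then 1 else 0
    | .inr w' => if w' = w then 1 else 0 with hy₀
  refine ⟨y₀, ?_, ?_⟩
  · rw [feas_iff]
    refine ⟨fun q => ?_, fun q hq => ?_, fun w' => ?_, fun S => ?_, ?_⟩
    · rw [hy₀]; dsimp only; split <;> norm_num
    · rw [hy₀]; dsimp only
      rw [if_neg]
      intro hc
      rw [hc] at hq
      simp only at hq
      rw [hbw] at hq
      simp at hq
    · rw [hy₀]; dsimp only; split <;> norm_num
    · rw [hy₀]; dsimp only
      rw [Finset.sum_eq_single b
        (fun b' _ hb' => by rw [if_neg]; exact fun hc => hb' (congrArg Prod.snd hc))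
        (by simp)]
      rw [Finset.sum_eq_single w
        (fun w' _ hw' => by by_cases hc : sec k V w' = S <;> simp [hc, hw']) (by simp)]
      by_cases hS : S = sec k V w
      · subst hS
        simp
      · rw [if_neg (fun hc => hS (congrArg Prod.fst hc)), if_neg (fun hc => hS hc.symm)]
    · rw [hy₀]; dsimp only
      rw [Finset.sum_eq_single w (fun w' _ hw' => if_neg hw') (by simp), if_pos rfl]
  · rw [phi_eq2, hy₀]
    dsimp only
    rw [Finset.sum_eq_single ((sec k V w), b)
      (fun q _ hq => by rw [if_neg hq, zero_smul])
      (by simp)]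
    rw [Finset.sum_eq_single w (fun w' _ hw' => by rw [if_neg hw', zero_smul]) (by simp)]
    rw [if_pos rfl, if_pos rfl, one_smul, one_smul]
    exact hpt


lemma hasLinExt_of_fintype {d : ℕ} (P : Set (EuclideanSpace ℝ (Fin d)))
    (ι κ : Type) [Fintype ι] [Fintype κ]
    (φ : (ι → ℝ) →ᵃ[ℝ] EuclideanSpace ℝ (Fin d)) (a : κ → ((ι → ℝ) →ᵃ[ℝ] ℝ))
    (h : P = φ '' {y | ∀ j, 0 ≤ a j y}) : HasLinExt P (Fintype.card κ) := by
  classical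
  set n := Fintype.card ι
  let eι : ι ≃ Fin n := Fintype.equivFin ι
  let eκ : κ ≃ Fin (Fintype.card κ) := Fintype.equivFin κ
  let Λ : EuclideanSpace ℝ (Fin n) ≃ₗ[ℝ] (ι → ℝ) :=
    (WithLp.linearEquiv 2 ℝ (Fin n → ℝ)).trans (LinearEquiv.funCongrLeft ℝ ℝ eι)
  let Λa : EuclideanSpace ℝ (Fin n) →ᵃ[ℝ] (ι → ℝ) := Λ.toLinearMap.toAffineMap
  refine ⟨n, φ.comp Λa, fun j => (a (eκ.symm j)).comp Λa, ?_⟩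
  have hset : {x : EuclideanSpace ℝ (Fin n) | ∀ j, 0 ≤ (a (eκ.symm j)).comp Λa x}
      = ⇑Λ ⁻¹' {y | ∀ j, 0 ≤ a j y} := by
    ext x
    simp only [Set.mem_setOf_eq, Set.mem_preimage, AffineMap.comp_apply]
    constructor
    · intro hx j
      have := hx (eκ j)
      simpa [Λa] using this
    · intro hx j
      exact hx _
  have himg : ∀ x, (φ.comp Λa) x = φ (Λ x) := fun _ => rfl
  rw [h]
  ext z
  constructor
  · rintro ⟨y, hy, rfl⟩
    exact ⟨Λ.symm y, by rw [hset]; simpa using hy, by simp [himg]⟩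
  · rintro ⟨x, hx, rfl⟩
    rw [hset] at hx
    exact ⟨Λ x, hx, rfl⟩

/-- the number of inequalities used -/
def NN (d k : ℕ) : ℕ := 2 ^ (2 ^ k) * (2 * 2 ^ k + 2) + 2 ^ (d - k) + 2

lemma card_JJ : Fintype.card (JJ d k) = NN d k := by
  simp only [JJ, NN, Fintype.card_sum, Fintype.card_prod, Fintype.card_fun, Fintype.card_bool,
    Fintype.card_fin]
  ring

theorem main_construction (hk : k ≤ d) (hV : V ⊆ {x | ∀ i, x i = 0 ∨ x i = 1})
    (hne : V.Nonempty) : HasLinExt (convexHull ℝ V) (NN d k) := by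
  rw [← card_JJ (d := d) (k := k)]
  apply hasLinExt_of_fintype _ (II d k) (JJ d k) (phiMap k) (aMap k V)
  apply le_antisymm
  · exact hull_subset_image k V hk hV
  · exact image_subset_hull k V hne

lemma l24 : ∀ n : ℕ, 24 * (n + 9) ≤ 2 ^ (n + 8) := by
  intro n
  induction n with
  | zero => norm_num
  | succ m ih =>
    have h24 : 24 ≤ 2 ^ (m + 8) := le_trans (by omega) ih
    calc 24 * (m + 1 + 9) = 24 * (m + 9) + 24 := by ring
      _ ≤ 2 ^ (m + 8) + 2 ^ (m + 8) := Nat.add_le_add ih h24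
      _ = 2 ^ (m + 9) := by
          have : (2:ℕ) ^ (m + 9) = 2 ^ (m + 8) * 2 := pow_succ 2 (m + 8)
          omega

lemma l16 : ∀ c : ℕ, 4 ≤ c → 16 * (c * (c + 1)) ≤ 2 ^ (3 * c) := by
  intro c hc
  induction c with
  | zero => omega
  | succ m ih =>
    rcases Nat.lt_or_ge m 4 with hm | hm
    · interval_cases m
      · omega
      · omega
      · omega
      · norm_num
    · have ih' := ih hm
      have step : 16 * ((m + 1) * (m + 1 + 1)) ≤ 2 * (16 * (m * (m + 1))) := by nlinarith
      calc 16 * ((m + 1) * (m + 1 + 1)) ≤ 2 * (16 * (m * (m + 1))) := step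
        _ ≤ 2 * 2 ^ (3 * m) := by omega
        _ ≤ 2 ^ (3 * (m + 1)) := by
            rw [show 3 * (m + 1) = 3 * m + 3 by ring, pow_add]
            have : (1:ℕ) ≤ 2 ^ (3*m) := Nat.one_le_two_pow
            nlinarith
  
lemma choose_k (d : ℕ) (hd : 4 ≤ d) : ∃ k, k ≤ d ∧ d * NN d k ≤ 9 * 2 ^ d := by
  by_cases h8 : d ≤ 8
  · refine ⟨0, Nat.zero_le d, ?_⟩
    have : NN d 0 = 2 ^ d + 10 := by simp [NN]; ring
    rw [this]
    interval_cases d <;> norm_num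
  · push_neg at h8
    have hd9 : 9 ≤ d := h8
    set L := Nat.log 2 (d - 1) with hLdef
    have hdm1 : d - 1 ≠ 0 := by omega
    have hL3 : 3 ≤ L := by
      have : 2 ^ 3 ≤ d - 1 := by omega
      exact (Nat.le_log_iff_pow_le (by norm_num) hdm1).2 this
    set k := L - 2 with hkdef
    have hLk : L = k + 2 := by omega
    have hk1 : 1 ≤ k := by omega
    set c := 2 ^ k with hcdef
    have hc2 : 2 ≤ c := by
      calc 2 = 2 ^ 1 := rfl
        _ ≤ 2 ^ k := Nat.pow_le_pow_right (by norm_num) hk1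
    have h4c : 4 * c = 2 ^ L := by
      rw [hLk, pow_add, hcdef]; ring
    have hup : 4 * c ≤ d - 1 := by
      rw [h4c]; exact Nat.pow_log_le_self 2 hdm1
    have hlow : d ≤ 8 * c := by
      have hstep : d - 1 < 2 ^ (L + 1) := Nat.lt_pow_succ_log_self (by norm_num : 1 < 2) (d - 1)
      have h8c : 2 ^ (L + 1) = 8 * c := by rw [hLk, pow_add, pow_add, hcdef]; ring
      omega
    have hkd : k ≤ d := by
      have : k < 2 ^ k := Nat.lt_two_pow_self
      omega
    refine ⟨k, hkd, ?_⟩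
    have hNN : NN d k = 2 ^ c * (2 * c + 2) + 2 ^ (d - k) + 2 := rfl
    rw [hNN]
    have part1 : d * (2 ^ c * (2 * c + 2)) ≤ 2 ^ (d - 1) := by
      rcases Nat.lt_or_ge c 4 with hc4 | hc4
      · have hceq : c = 2 := by
          rcases (by omega : k = 1 ∨ 2 ≤ k) with hke | hke
          · rw [hcdef, hke]; norm_num
          · exfalso
            have : (4:ℕ) ≤ c := by
              calc (4:ℕ) = 2 ^ 2 := rfl
                _ ≤ 2 ^ k := Nat.pow_le_pow_right (by norm_num) hke
                _ = c := hcdef.symm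
            omega
        have : d * (2 ^ c * (2 * c + 2)) ≤ 24 * d := by
          rw [hceq]; norm_num; omega
        calc d * (2 ^ c * (2 * c + 2)) ≤ 24 * d := this
          _ = 24 * ((d - 9) + 9) := by congr 1; omega
          _ ≤ 2 ^ ((d - 9) + 8) := l24 (d - 9)
          _ = 2 ^ (d - 1) := by congr 1; omega
      · calc d * (2 ^ c * (2 * c + 2)) ≤ (8 * c) * (2 ^ c * (2 * c + 2)) :=
              Nat.mul_le_mul_right _ hlow
          _ = 16 * (c * (c + 1)) * 2 ^ c := by ring
          _ ≤ 2 ^ (3 * c) * 2 ^ c := Nat.mul_le_mul_right _ (l16 c hc4)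
          _ = 2 ^ (4 * c) := by rw [← pow_add]; congr 1; ring
          _ ≤ 2 ^ (d - 1) := Nat.pow_le_pow_right (by norm_num) (by omega)
    have part2 : d * 2 ^ (d - k) ≤ 8 * 2 ^ d := by
      calc d * 2 ^ (d - k) ≤ (8 * c) * 2 ^ (d - k) := Nat.mul_le_mul_right _ hlow
        _ = 8 * (2 ^ k * 2 ^ (d - k)) := by rw [hcdef]; ring
        _ = 8 * 2 ^ d := by rw [← pow_add]; congr 2; omega
    have part3 : d * 2 ≤ 2 ^ (d - 1) := by
      calc d * 2 ≤ 24 * ((d - 9) + 9) := by omega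
        _ ≤ 2 ^ ((d - 9) + 8) := l24 (d - 9)
        _ = 2 ^ (d - 1) := by congr 1; omega
    have hsplit : 2 ^ (d - 1) + 2 ^ (d - 1) = 2 ^ d := by
      rw [← two_mul, ← pow_succ']
      congr 1
      omega
    calc d * (2 ^ c * (2 * c + 2) + 2 ^ (d - k) + 2)
        = d * (2 ^ c * (2 * c + 2)) + d * 2 ^ (d - k) + d * 2 := by ring
      _ ≤ 2 ^ (d - 1) + 8 * 2 ^ d + 2 ^ (d - 1) := by
          exact Nat.add_le_add (Nat.add_le_add part1 part2) part3
      _ = 9 * 2 ^ d := by omega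

end S18

end Aux

theorem statement18 (d : ℕ) (hd : 4 ≤ d) (P : Set (EuclideanSpace ℝ (Fin d)))
    (hP : IsZeroOnePolytope P) :
    (xc P : ℝ) ≤ 9 * 2 ^ d / d := by
  obtain ⟨V, hVc, rfl⟩ := hP
  by_cases htriv : (convexHull ℝ V : Set (EuclideanSpace ℝ (Fin d))) = ∅ ∨
      ∃ p, convexHull ℝ V = {p}
  · have h0 : xc (convexHull ℝ V) = 0 := if_pos htriv
    rw [h0]
    push_cast
    positivity
  · have hne : V.Nonempty := by
      rcases Set.eq_empty_or_nonempty V with h | h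
      · exact absurd (Or.inl (by rw [h, convexHull_empty])) htriv
      · exact h
    obtain ⟨k, hk, hnum⟩ := S18.choose_k d hd
    have hext := S18.main_construction k V hk hVc hne
    have hxc : xc (convexHull ℝ V) ≤ S18.NN d k := by
      have h1 : xc (convexHull ℝ V) = sInf {l | HasLinExt (convexHull ℝ V) l} := if_neg htriv
      rw [h1]
      exact Nat.sInf_le hext
    have hdpos : (0:ℝ) < d := by
      have : (0:ℕ) < d := by omega
      exact_mod_cast this
    have hfin : ((S18.NN d k : ℕ) : ℝ) ≤ 9 * 2 ^ d / d := by
      rw [le_div_iff₀ hdpos]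
      have : ((d * S18.NN d k : ℕ) : ℝ) ≤ ((9 * 2 ^ d : ℕ) : ℝ) := by exact_mod_cast hnum
      push_cast at this
      linarith
    calc ((xc (convexHull ℝ V) : ℕ) : ℝ) ≤ ((S18.NN d k : ℕ) : ℝ) := by exact_mod_cast hxc
      _ ≤ 9 * 2 ^ d / d := hfin
end
end

section
/- Let d ∈ ℕ, let P be a 0/1-polytope in ℝ^d, and let s ∈ {0,1,…,d}. Then xc(P) ≤ 2^{d−s} + 2^{2^s}·(2^s + 1). -/
open Metric Set

noncomputable section

open Finset

attribute [local instance] Classical.propDecidable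

abbrev Euc (n : ℕ) := EuclideanSpace ℝ (Fin n)

/-- coordinate as an affine functional -/
def coordAff {n : ℕ} (i : Fin n) : Euc n →ᵃ[ℝ] ℝ :=
  (PiLp.projₗ 2 (fun _ : Fin n => ℝ) i).toAffineMap

@[simp] lemma coordAff_apply {n : ℕ} (i : Fin n) (x : Euc n) : coordAff i x = x i := rfl

/-- evaluation as AddMonoidHom -/
def evalAM {n : ℕ} (x : Euc n) : (Euc n →ᵃ[ℝ] ℝ) →+ ℝ where
  toFun f := f x
  map_zero' := rfl
  map_add' _ _ := rfl

lemma affSum_apply {n : ℕ} {ι : Type*} (s : Finset ι) (f : ι → (Euc n →ᵃ[ℝ] ℝ)) (x : Euc n) :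
    (∑ i ∈ s, f i) x = ∑ i ∈ s, f i x := map_sum (evalAM x) f s

/-- evaluation at a coordinate as AddMonoidHom -/
def evalCoordAM {d : ℕ} (j : Fin d) : Euc d →+ ℝ where
  toFun y := y j
  map_zero' := rfl
  map_add' _ _ := rfl

lemma eucSum_apply {d : ℕ} {ι : Type*} (s : Finset ι) (f : ι → Euc d) (j : Fin d) :
    (∑ i ∈ s, f i) j = ∑ i ∈ s, f i j := map_sum (evalCoordAM j) f s

lemma eucSmul_apply {d : ℕ} (c : ℝ) (v : Euc d) (j : Fin d) : (c • v) j = c * v j := rfl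

section Constr

variable (d s : ℕ) (Vf : Finset (Euc d))

/-- prefix of a vector -/
def preV (v : Euc d) : Fin (d - s) → ℝ := fun i => v ⟨i, lt_of_lt_of_le i.2 (Nat.sub_le d s)⟩

/-- suffix of a vector (needs `s ≤ d`) -/
def sufV (hs : s ≤ d) (v : Euc d) : Fin s → ℝ := fun i => v ⟨d - s + i, by omega⟩

def prefxs : Finset (Fin (d - s) → ℝ) := Vf.image (preV d s)

def fib (hs : s ≤ d) (p : Fin (d - s) → ℝ) : Finset (Fin s → ℝ) :=
  (Vf.filter (fun v => preV d s v = p)).image (sufV d s hs)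

def fams (hs : s ≤ d) : Finset (Finset (Fin s → ℝ)) := (prefxs d s Vf).image (fib d s Vf hs)

/-- choice of an element of `T` -/
def t0 (T : Finset (Fin s → ℝ)) : Fin s → ℝ := if h : T.Nonempty then h.choose else 0

lemma t0_mem {T : Finset (Fin s → ℝ)} (h : T.Nonempty) : t0 s T ∈ T := by
  rw [t0, dif_pos h]; exact h.choose_spec

variable (hs : s ≤ d)

lemma fams_nonempty_mem {T : Finset (Fin s → ℝ)} (hT : T ∈ fams d s Vf hs) : T.Nonempty := by
  rw [fams, Finset.mem_image] at hT
  obtain ⟨p, hp, rfl⟩ := hT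
  rw [prefxs, Finset.mem_image] at hp
  obtain ⟨v, hv, rfl⟩ := hp
  exact ⟨sufV d s hs v, mem_image_of_mem _ (mem_filter.2 ⟨hv, rfl⟩)⟩

/-- index type for the variables -/
abbrev VarIdx : Type :=
  {p // p ∈ prefxs d s Vf} ⊕
    (Σ T : {T // T ∈ fams d s Vf hs}, {t // t ∈ T.1.erase (t0 s T.1)})

/-- index type for the inequalities -/
abbrev IneqIdx : Type :=
  {p // p ∈ prefxs d s Vf} ⊕
    (Bool ⊕ (Σ T : {T // T ∈ fams d s Vf hs}, {t // t ∈ T.1}))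

def nVar : ℕ := Fintype.card (VarIdx d s Vf hs)

def eVar : VarIdx d s Vf hs ≃ Fin (nVar d s Vf hs) := Fintype.equivFin _

/-- the affine functional giving the λ-variable of a prefix -/
def lamF (p : Fin (d - s) → ℝ) : Euc (nVar d s Vf hs) →ᵃ[ℝ] ℝ :=
  if h : p ∈ prefxs d s Vf then coordAff (eVar d s Vf hs (Sum.inl ⟨p, h⟩)) else 0

def sumLamF : Euc (nVar d s Vf hs) →ᵃ[ℝ] ℝ := ∑ p ∈ prefxs d s Vf, lamF d s Vf hs p

def fibLamF (T : Finset (Fin s → ℝ)) : Euc (nVar d s Vf hs) →ᵃ[ℝ] ℝ :=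
  ∑ p ∈ (prefxs d s Vf).filter (fun p => fib d s Vf hs p = T), lamF d s Vf hs p

/-- the affine functional giving the μ-variable (a genuine coordinate) -/
def muVarF (T : Finset (Fin s → ℝ)) (t : Fin s → ℝ) : Euc (nVar d s Vf hs) →ᵃ[ℝ] ℝ :=
  if h : T ∈ fams d s Vf hs ∧ t ∈ T.erase (t0 s T) then
    coordAff (eVar d s Vf hs (Sum.inr ⟨⟨T, h.1⟩, ⟨t, h.2⟩⟩)) else 0

/-- the affine functional giving the μ-value (substituted at `t0`) -/
def muF (T : Finset (Fin s → ℝ)) (t : Fin s → ℝ) : Euc (nVar d s Vf hs) →ᵃ[ℝ] ℝ :=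
  if t = t0 s T then fibLamF d s Vf hs T - ∑ u ∈ T.erase (t0 s T), muVarF d s Vf hs T u
  else muVarF d s Vf hs T t

/-- key identity: the μ-values over `T` sum to the λ-mass of the fiber class of `T`. -/
lemma sum_muF (T : Finset (Fin s → ℝ)) (hT : T ∈ fams d s Vf hs) (x : Euc (nVar d s Vf hs)) :
    ∑ t ∈ T, muF d s Vf hs T t x = fibLamF d s Vf hs T x := by
  have h0 : t0 s T ∈ T := t0_mem s (fams_nonempty_mem d s Vf hs hT)
  rw [← Finset.add_sum_erase T _ h0]
  have h1 : ∀ t ∈ T.erase (t0 s T), muF d s Vf hs T t x = muVarF d s Vf hs T t x := by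
    intro t ht
    rw [muF, if_neg (Finset.ne_of_mem_erase ht)]
  rw [Finset.sum_congr rfl h1, muF, if_pos rfl]
  have hsub : ∀ f g : Euc (nVar d s Vf hs) →ᵃ[ℝ] ℝ, (f - g) x = f x - g x := fun _ _ => rfl
  rw [hsub, affSum_apply, sub_add_cancel]


/-- the inequality family -/
def ineqF : IneqIdx d s Vf hs → (Euc (nVar d s Vf hs) →ᵃ[ℝ] ℝ) := fun i =>
  match i with
  | .inl p => lamF d s Vf hs p.1
  | .inr (.inl true) => AffineMap.const ℝ _ 1 - sumLamF d s Vf hs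
  | .inr (.inl false) => sumLamF d s Vf hs - AffineMap.const ℝ _ 1
  | .inr (.inr ⟨T, t⟩) => muF d s Vf hs T.1 t.1

def Kset : Set (Euc (nVar d s Vf hs)) := {x | ∀ i, 0 ≤ ineqF d s Vf hs i x}

def phiCoord (j : Fin d) : Euc (nVar d s Vf hs) →ᵃ[ℝ] ℝ :=
  if h : (j : ℕ) < d - s then ∑ p ∈ prefxs d s Vf, p ⟨j, h⟩ • lamF d s Vf hs p
  else ∑ T ∈ fams d s Vf hs, ∑ t ∈ T,
    t ⟨(j : ℕ) - (d - s), by have := j.2; omega⟩ • muF d s Vf hs T t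

def phiMap : Euc (nVar d s Vf hs) →ᵃ[ℝ] Euc d :=
  ((WithLp.linearEquiv 2 ℝ (Fin d → ℝ)).symm.toLinearMap).toAffineMap.comp
    (AffineMap.pi (phiCoord d s Vf hs))

@[simp] lemma phiMap_apply_coord (x : Euc (nVar d s Vf hs)) (j : Fin d) :
    phiMap d s Vf hs x j = phiCoord d s Vf hs j x := rfl

lemma affSmul_apply {n : ℕ} (c : ℝ) (f : Euc n →ᵃ[ℝ] ℝ) (x : Euc n) :
    (c • f) x = c * f x := rfl

section Feas
variable {d s Vf hs} {x : Euc (nVar d s Vf hs)} (hx : x ∈ Kset d s Vf hs)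
include hx

lemma lam_nonneg {p : Fin (d - s) → ℝ} (hp : p ∈ prefxs d s Vf) :
    0 ≤ lamF d s Vf hs p x := hx (Sum.inl ⟨p, hp⟩)

lemma sum_lam_eq_one : ∑ p ∈ prefxs d s Vf, lamF d s Vf hs p x = 1 := by
  have h1 := hx (Sum.inr (Sum.inl true))
  have h2 := hx (Sum.inr (Sum.inl false))
  have e1 : ineqF d s Vf hs (Sum.inr (Sum.inl true)) x = 1 - sumLamF d s Vf hs x := rfl
  have e2 : ineqF d s Vf hs (Sum.inr (Sum.inl false)) x = sumLamF d s Vf hs x - 1 := rfl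
  rw [e1] at h1; rw [e2] at h2
  have : sumLamF d s Vf hs x = 1 := le_antisymm (by linarith) (by linarith)
  rw [← this, sumLamF, affSum_apply]

lemma mu_nonneg {T : Finset (Fin s → ℝ)} (hT : T ∈ fams d s Vf hs)
    {t : Fin s → ℝ} (ht : t ∈ T) : 0 ≤ muF d s Vf hs T t x :=
  hx (Sum.inr (Sum.inr ⟨⟨T, hT⟩, ⟨t, ht⟩⟩))

end Feas


lemma preV_coord (v : Euc d) (j : Fin d) (h : (j : ℕ) < d - s) :
    preV d s v ⟨j, h⟩ = v j := rfl

lemma sufV_coord (v : Euc d) (j : Fin d) (h : ¬ (j : ℕ) < d - s) (h2 : (j : ℕ) - (d - s) < s) :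
    sufV d s hs v ⟨(j : ℕ) - (d - s), h2⟩ = v j := by
  show v _ = v j
  refine congrArg v.ofLp ?_
  refine Fin.ext ?_
  show d - s + ((j : ℕ) - (d - s)) = (j : ℕ)
  omega

lemma eq_of_pre_suf {v w : Euc d} (h1 : preV d s v = preV d s w)
    (h2 : sufV d s hs v = sufV d s hs w) : v = w := by
  ext j
  by_cases h : (j : ℕ) < d - s
  · rw [← preV_coord d s v j h, ← preV_coord d s w j h, h1]
  · have h3 : (j : ℕ) - (d - s) < s := by have := j.2; omega
    rw [← sufV_coord d s hs v j h h3, ← sufV_coord d s hs w j h h3, h2]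

lemma pre_mem {v : Euc d} (hv : v ∈ Vf) : preV d s v ∈ prefxs d s Vf :=
  mem_image_of_mem _ hv

lemma suf_mem_fib {v : Euc d} (hv : v ∈ Vf) : sufV d s hs v ∈ fib d s Vf hs (preV d s v) :=
  mem_image_of_mem _ (mem_filter.2 ⟨hv, rfl⟩)

lemma fib_mem_fams {p : Fin (d - s) → ℝ} (hp : p ∈ prefxs d s Vf) :
    fib d s Vf hs p ∈ fams d s Vf hs := mem_image_of_mem _ hp

/-- the weight of a vertex -/
def wgt (x : Euc (nVar d s Vf hs)) (v : Euc d) : ℝ :=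
  lamF d s Vf hs (preV d s v) x *
    muF d s Vf hs (fib d s Vf hs (preV d s v)) (sufV d s hs v) x /
    fibLamF d s Vf hs (fib d s Vf hs (preV d s v)) x

section Feas2
variable {d s Vf hs} {x : Euc (nVar d s Vf hs)} (hx : x ∈ Kset d s Vf hs)
include hx

lemma fibLam_nonneg {T : Finset (Fin s → ℝ)} (hT : T ∈ fams d s Vf hs) :
    0 ≤ fibLamF d s Vf hs T x := by
  rw [fibLamF, affSum_apply]
  exact Finset.sum_nonneg fun p hp => lam_nonneg hx (mem_filter.1 hp).1

lemma lam_eq_zero_of_fibLam_zero {T : Finset (Fin s → ℝ)} (hT : T ∈ fams d s Vf hs)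
    (h0 : fibLamF d s Vf hs T x = 0) {p : Fin (d - s) → ℝ} (hp : p ∈ prefxs d s Vf)
    (hfp : fib d s Vf hs p = T) : lamF d s Vf hs p x = 0 := by
  rw [fibLamF, affSum_apply] at h0
  exact (Finset.sum_eq_zero_iff_of_nonneg
    (fun q hq => lam_nonneg hx (mem_filter.1 hq).1)).1 h0 p (mem_filter.2 ⟨hp, hfp⟩)

lemma mu_eq_zero_of_fibLam_zero {T : Finset (Fin s → ℝ)} (hT : T ∈ fams d s Vf hs)
    (h0 : fibLamF d s Vf hs T x = 0) {t : Fin s → ℝ} (ht : t ∈ T) :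
    muF d s Vf hs T t x = 0 := by
  have := sum_muF d s Vf hs T hT x
  rw [h0] at this
  exact (Finset.sum_eq_zero_iff_of_nonneg (fun u hu => mu_nonneg hx hT hu)).1 this t ht

lemma wgt_nonneg {v : Euc d} (hv : v ∈ Vf) : 0 ≤ wgt d s Vf hs x v := by
  have h1 := pre_mem d s Vf (v := v) hv
  exact div_nonneg (mul_nonneg (lam_nonneg hx h1)
    (mu_nonneg hx (fib_mem_fams d s Vf hs h1) (suf_mem_fib d s Vf hs hv)))
    (fibLam_nonneg hx (fib_mem_fams d s Vf hs h1))

lemma sum_wgt_filter {p : Fin (d - s) → ℝ} (hp : p ∈ prefxs d s Vf) (g : (Fin s → ℝ) → ℝ) :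
    ∑ v ∈ Vf.filter (fun v => preV d s v = p),
        wgt d s Vf hs x v * g (sufV d s hs v)
      = ∑ t ∈ fib d s Vf hs p,
          lamF d s Vf hs p x * muF d s Vf hs (fib d s Vf hs p) t x /
            fibLamF d s Vf hs (fib d s Vf hs p) x * g t := by
  set T := fib d s Vf hs p with hTdef
  set S := fibLamF d s Vf hs T x with hSdef
  have hinj : ∀ v ∈ Vf.filter (fun v => preV d s v = p),
      ∀ w ∈ Vf.filter (fun v => preV d s v = p), sufV d s hs v = sufV d s hs w → v = w := by
    intro v hv w hw h
    exact eq_of_pre_suf d s hs ((mem_filter.1 hv).2.trans (mem_filter.1 hw).2.symm) h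
  have himg : (Vf.filter (fun v => preV d s v = p)).image (sufV d s hs) = T := rfl
  calc ∑ v ∈ Vf.filter (fun v => preV d s v = p), wgt d s Vf hs x v * g (sufV d s hs v)
      = ∑ v ∈ Vf.filter (fun v => preV d s v = p),
          lamF d s Vf hs p x * muF d s Vf hs T (sufV d s hs v) x / S * g (sufV d s hs v) := by
        refine Finset.sum_congr rfl fun v hv => ?_
        rw [wgt, (mem_filter.1 hv).2]
    _ = ∑ t ∈ T, lamF d s Vf hs p x * muF d s Vf hs T t x / S * g t := by
        rw [← himg, Finset.sum_image hinj]

lemma sum_wgt_filter_one {p : Fin (d - s) → ℝ} (hp : p ∈ prefxs d s Vf) :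
    ∑ v ∈ Vf.filter (fun v => preV d s v = p), wgt d s Vf hs x v = lamF d s Vf hs p x := by
  set T := fib d s Vf hs p with hTdef
  set S := fibLamF d s Vf hs T x with hSdef
  have hTmem : T ∈ fams d s Vf hs := fib_mem_fams d s Vf hs hp
  have := sum_wgt_filter hx hp (fun _ => 1)
  simp only [mul_one] at this
  rw [this]
  have : ∑ t ∈ T, lamF d s Vf hs p x * muF d s Vf hs T t x / S
      = lamF d s Vf hs p x * (∑ t ∈ T, muF d s Vf hs T t x) / S := by
    rw [Finset.mul_sum, Finset.sum_div]
  rw [this, sum_muF d s Vf hs T hTmem x, ← hSdef]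
  rcases eq_or_ne S 0 with h | h
  · rw [h, lam_eq_zero_of_fibLam_zero hx hTmem h hp rfl]
    simp
  · rw [mul_div_assoc, div_self h, mul_one]

lemma sum_wgt_eq_one : ∑ v ∈ Vf, wgt d s Vf hs x v = 1 := by
  rw [← Finset.sum_fiberwise_of_maps_to (g := preV d s) (fun v hv => pre_mem d s Vf hv)
    (wgt d s Vf hs x)]
  rw [Finset.sum_congr rfl fun p hp => sum_wgt_filter_one hx hp]
  exact sum_lam_eq_one hx

omit hx in
lemma div_mul_cancel_of (a S : ℝ) (h : S = 0 → a = 0) : a / S * S = a := by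
  rcases eq_or_ne S 0 with h0 | h0
  · rw [h0, h h0]; simp
  · field_simp

omit hx in
lemma fibLamF_eval (T : Finset (Fin s → ℝ)) :
    fibLamF d s Vf hs T x
      = ∑ p ∈ (prefxs d s Vf).filter (fun p => fib d s Vf hs p = T), lamF d s Vf hs p x := by
  rw [fibLamF, affSum_apply]

lemma sum_wgt_smul (j : Fin d) :
    ∑ v ∈ Vf, wgt d s Vf hs x v * v j = phiCoord d s Vf hs j x := by
  rw [← Finset.sum_fiberwise_of_maps_to (g := preV d s) (fun v hv => pre_mem d s Vf hv)
    (fun v => wgt d s Vf hs x v * v j)]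
  by_cases h : (j : ℕ) < d - s
  · rw [phiCoord, dif_pos h, affSum_apply]
    refine Finset.sum_congr rfl fun p hp => ?_
    rw [affSmul_apply]
    have e1 : ∀ v ∈ Vf.filter (fun v => preV d s v = p),
        wgt d s Vf hs x v * v j = wgt d s Vf hs x v * p ⟨j, h⟩ := by
      intro v hv
      rw [← preV_coord d s v j h, (mem_filter.1 hv).2]
    rw [Finset.sum_congr rfl e1, ← Finset.sum_mul, sum_wgt_filter_one hx hp, mul_comm]
  · rw [phiCoord, dif_neg h, affSum_apply]
    have h2 : (j : ℕ) - (d - s) < s := by have := j.2; omega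
    have e1 : ∀ p ∈ prefxs d s Vf,
        ∑ v ∈ Vf.filter (fun v => preV d s v = p), wgt d s Vf hs x v * v j
          = ∑ t ∈ fib d s Vf hs p,
              lamF d s Vf hs p x * muF d s Vf hs (fib d s Vf hs p) t x /
                fibLamF d s Vf hs (fib d s Vf hs p) x * t ⟨(j : ℕ) - (d - s), h2⟩ := by
      intro p hp
      have e0 : ∀ v ∈ Vf.filter (fun v => preV d s v = p),
          wgt d s Vf hs x v * v j
            = wgt d s Vf hs x v * sufV d s hs v ⟨(j : ℕ) - (d - s), h2⟩ := by
        intro v hv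
        rw [sufV_coord d s hs v j h h2]
      exact (Finset.sum_congr rfl e0).trans
        (sum_wgt_filter hx hp (fun t => t ⟨(j : ℕ) - (d - s), h2⟩))
    rw [Finset.sum_congr rfl e1]
    rw [← Finset.sum_fiberwise_of_maps_to (g := fib d s Vf hs)
      (fun p hp => fib_mem_fams d s Vf hs hp)]
    refine Finset.sum_congr rfl fun T hT => ?_
    have e2 : ∀ p ∈ (prefxs d s Vf).filter (fun p => fib d s Vf hs p = T),
        ∑ t ∈ fib d s Vf hs p,
            lamF d s Vf hs p x * muF d s Vf hs (fib d s Vf hs p) t x /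
              fibLamF d s Vf hs (fib d s Vf hs p) x * t ⟨(j : ℕ) - (d - s), h2⟩
          = ∑ t ∈ T, lamF d s Vf hs p x *
              (muF d s Vf hs T t x / fibLamF d s Vf hs T x * t ⟨(j : ℕ) - (d - s), h2⟩) := by
      intro p hp
      rw [(mem_filter.1 hp).2]
      exact Finset.sum_congr rfl fun t ht => by ring
    rw [Finset.sum_congr rfl e2, Finset.sum_comm]
    rw [affSum_apply]
    refine Finset.sum_congr rfl fun t ht => ?_
    rw [← Finset.sum_mul, ← fibLamF_eval, affSmul_apply]
    have h3 : muF d s Vf hs T t x / fibLamF d s Vf hs T x * fibLamF d s Vf hs T x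
        = muF d s Vf hs T t x :=
      div_mul_cancel_of _ _ (fun h0 => mu_eq_zero_of_fibLam_zero hx hT h0 ht)
    linear_combination (t ⟨(j : ℕ) - (d - s), h2⟩) * h3

lemma centerMass_eq_phi : ∑ v ∈ Vf, wgt d s Vf hs x v • v = phiMap d s Vf hs x := by
  ext j
  rw [eucSum_apply, phiMap_apply_coord, ← sum_wgt_smul hx j]
  exact Finset.sum_congr rfl fun v _ => rfl

end Feas2

lemma image_subset_hull :
    phiMap d s Vf hs '' Kset d s Vf hs ⊆ convexHull ℝ (Vf : Set (Euc d)) := by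
  rintro _ ⟨x, hx, rfl⟩
  have h1 : Vf.centerMass (wgt d s Vf hs x) id ∈ convexHull ℝ (Vf : Set (Euc d)) :=
    Finset.centerMass_mem_convexHull Vf (fun v hv => wgt_nonneg hx hv)
      (by rw [sum_wgt_eq_one hx]; norm_num) (fun v hv => hv)
  have h2 : Vf.centerMass (wgt d s Vf hs x) id = phiMap d s Vf hs x := by
    rw [Finset.centerMass_eq_of_sum_1 _ _ (sum_wgt_eq_one hx), ← centerMass_eq_phi hx]
    rfl
  rwa [h2] at h1


/-- the preimage point associated to a vertex -/
def vtxG (v : Euc d) : VarIdx d s Vf hs → ℝ := fun iv =>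
  match iv with
  | .inl p => if p.1 = preV d s v then 1 else 0
  | .inr ⟨T, t⟩ =>
      if T.1 = fib d s Vf hs (preV d s v) ∧ t.1 = sufV d s hs v then 1 else 0

def vtxPt (v : Euc d) : Euc (nVar d s Vf hs) :=
  (WithLp.equiv 2 (Fin (nVar d s Vf hs) → ℝ)).symm
    (fun i => vtxG d s Vf hs v ((eVar d s Vf hs).symm i))

lemma coordAff_vtxPt (v : Euc d) (iv : VarIdx d s Vf hs) :
    coordAff (eVar d s Vf hs iv) (vtxPt d s Vf hs v) = vtxG d s Vf hs v iv := by
  show vtxG d s Vf hs v ((eVar d s Vf hs).symm (eVar d s Vf hs iv)) = _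
  rw [Equiv.symm_apply_apply]

lemma lamF_vtx (v : Euc d) {p : Fin (d - s) → ℝ} (hp : p ∈ prefxs d s Vf) :
    lamF d s Vf hs p (vtxPt d s Vf hs v) = if p = preV d s v then 1 else 0 := by
  rw [lamF, dif_pos hp]
  exact coordAff_vtxPt d s Vf hs v (Sum.inl ⟨p, hp⟩)

lemma sumLam_vtx {v : Euc d} (hv : v ∈ Vf) :
    ∑ p ∈ prefxs d s Vf, lamF d s Vf hs p (vtxPt d s Vf hs v) = 1 := by
  rw [Finset.sum_congr rfl fun p hp => lamF_vtx d s Vf hs v hp,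
    Finset.sum_ite_eq' (prefxs d s Vf) (preV d s v) (fun _ => (1 : ℝ)),
    if_pos (pre_mem d s Vf hv)]

lemma fibLamF_vtx {v : Euc d} (hv : v ∈ Vf) (T : Finset (Fin s → ℝ)) :
    fibLamF d s Vf hs T (vtxPt d s Vf hs v)
      = if fib d s Vf hs (preV d s v) = T then 1 else 0 := by
  rw [fibLamF_eval, Finset.sum_congr rfl fun p hp => lamF_vtx d s Vf hs v (mem_filter.1 hp).1,
    Finset.sum_ite_eq' _ (preV d s v) (fun _ => (1 : ℝ))]
  simp only [Finset.mem_filter]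
  by_cases h : fib d s Vf hs (preV d s v) = T
  · rw [if_pos ⟨pre_mem d s Vf hv, h⟩, if_pos h]
  · rw [if_neg (fun hc => h hc.2), if_neg h]

lemma muVarF_vtx (v : Euc d) {T : Finset (Fin s → ℝ)} (hT : T ∈ fams d s Vf hs)
    {t : Fin s → ℝ} (ht : t ∈ T.erase (t0 s T)) :
    muVarF d s Vf hs T t (vtxPt d s Vf hs v)
      = if T = fib d s Vf hs (preV d s v) ∧ t = sufV d s hs v then 1 else 0 := by
  rw [muVarF, dif_pos ⟨hT, ht⟩]
  exact coordAff_vtxPt d s Vf hs v (Sum.inr ⟨⟨T, hT⟩, ⟨t, ht⟩⟩)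

lemma muF_vtx {v : Euc d} (hv : v ∈ Vf) {T : Finset (Fin s → ℝ)} (hT : T ∈ fams d s Vf hs)
    {t : Fin s → ℝ} (ht : t ∈ T) :
    muF d s Vf hs T t (vtxPt d s Vf hs v)
      = if T = fib d s Vf hs (preV d s v) ∧ t = sufV d s hs v then 1 else 0 := by
  by_cases h : t = t0 s T
  · rw [muF, if_pos h]
    have hsub : ∀ f g : Euc (nVar d s Vf hs) →ᵃ[ℝ] ℝ,
        (f - g) (vtxPt d s Vf hs v) = f (vtxPt d s Vf hs v) - g (vtxPt d s Vf hs v) :=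
      fun _ _ => rfl
    rw [hsub, affSum_apply, fibLamF_vtx d s Vf hs hv T,
      Finset.sum_congr rfl fun u hu => muVarF_vtx d s Vf hs v hT hu]
    by_cases hTv : T = fib d s Vf hs (preV d s v)
    · have hsv : sufV d s hs v ∈ T := by rw [hTv]; exact suf_mem_fib d s Vf hs hv
      have e1 : ∀ u ∈ T.erase (t0 s T),
          (if T = fib d s Vf hs (preV d s v) ∧ u = sufV d s hs v then (1:ℝ) else 0)
            = if u = sufV d s hs v then 1 else 0 := by
        intro u hu
        by_cases h2 : u = sufV d s hs v
        · rw [if_pos ⟨hTv, h2⟩, if_pos h2]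
        · rw [if_neg (fun hc => h2 hc.2), if_neg h2]
      rw [Finset.sum_congr rfl e1,
        Finset.sum_ite_eq' _ (sufV d s hs v) (fun _ => (1 : ℝ)), if_pos hTv.symm]
      by_cases h3 : sufV d s hs v = t0 s T
      · rw [if_neg (fun hc => (Finset.mem_erase.1 hc).1 h3), if_pos ⟨hTv, by rw [h, ← h3]⟩]
        norm_num
      · rw [if_pos (Finset.mem_erase.2 ⟨h3, hsv⟩), if_neg (fun hc => h3 (by rw [← hc.2, h]))]
        norm_num
    · have e1 : ∀ u ∈ T.erase (t0 s T),
          (if T = fib d s Vf hs (preV d s v) ∧ u = sufV d s hs v then (1:ℝ) else 0) = 0 := by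
        intro u _
        rw [if_neg (fun hc => hTv hc.1)]
      rw [Finset.sum_congr rfl e1, Finset.sum_const_zero,
        if_neg (fun hc => hTv hc.symm), if_neg (fun hc => hTv hc.1), sub_zero]
  · rw [muF, if_neg h]
    exact muVarF_vtx d s Vf hs v hT (Finset.mem_erase.2 ⟨h, ht⟩)

lemma vtxPt_mem_Kset {v : Euc d} (hv : v ∈ Vf) : vtxPt d s Vf hs v ∈ Kset d s Vf hs := by
  intro i
  match i with
  | .inl p =>
      show 0 ≤ lamF d s Vf hs p.1 (vtxPt d s Vf hs v)
      rw [lamF_vtx d s Vf hs v p.2]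
      split <;> norm_num
  | .inr (.inl true) =>
      have e : ineqF d s Vf hs (Sum.inr (Sum.inl true)) (vtxPt d s Vf hs v)
          = 1 - sumLamF d s Vf hs (vtxPt d s Vf hs v) := rfl
      show 0 ≤ ineqF d s Vf hs (Sum.inr (Sum.inl true)) (vtxPt d s Vf hs v)
      rw [e, sumLamF, affSum_apply, sumLam_vtx d s Vf hs hv]
      norm_num
  | .inr (.inl false) =>
      have e : ineqF d s Vf hs (Sum.inr (Sum.inl false)) (vtxPt d s Vf hs v)
          = sumLamF d s Vf hs (vtxPt d s Vf hs v) - 1 := rfl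
      show 0 ≤ ineqF d s Vf hs (Sum.inr (Sum.inl false)) (vtxPt d s Vf hs v)
      rw [e, sumLamF, affSum_apply, sumLam_vtx d s Vf hs hv]
      norm_num
  | .inr (.inr ⟨T, t⟩) =>
      show 0 ≤ muF d s Vf hs T.1 t.1 (vtxPt d s Vf hs v)
      rw [muF_vtx d s Vf hs hv T.2 t.2]
      split <;> norm_num

lemma phiMap_vtxPt {v : Euc d} (hv : v ∈ Vf) : phiMap d s Vf hs (vtxPt d s Vf hs v) = v := by
  ext j
  rw [phiMap_apply_coord]
  by_cases h : (j : ℕ) < d - s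
  · rw [phiCoord, dif_pos h, affSum_apply]
    have e1 : ∀ p ∈ prefxs d s Vf,
        (p ⟨j, h⟩ • lamF d s Vf hs p) (vtxPt d s Vf hs v)
          = if p = preV d s v then p ⟨j, h⟩ else 0 := by
      intro p hp
      rw [affSmul_apply, lamF_vtx d s Vf hs v hp]
      split <;> norm_num
    rw [Finset.sum_congr rfl e1, Finset.sum_ite_eq' _ (preV d s v) (fun p => p ⟨j, h⟩),
      if_pos (pre_mem d s Vf hv)]
    exact preV_coord d s v j h
  · rw [phiCoord, dif_neg h, affSum_apply]
    have h2 : (j : ℕ) - (d - s) < s := by have := j.2; omega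
    have e1 : ∀ T ∈ fams d s Vf hs,
        (∑ t ∈ T, t ⟨(j : ℕ) - (d - s), by have := j.2; omega⟩ • muF d s Vf hs T t)
            (vtxPt d s Vf hs v)
          = if T = fib d s Vf hs (preV d s v) then sufV d s hs v ⟨(j : ℕ) - (d - s), h2⟩
            else 0 := by
      intro T hT
      rw [affSum_apply]
      have e2 : ∀ t ∈ T,
          (t ⟨(j : ℕ) - (d - s), by have := j.2; omega⟩ • muF d s Vf hs T t)
              (vtxPt d s Vf hs v)
            = if T = fib d s Vf hs (preV d s v) then
                (if t = sufV d s hs v then t ⟨(j : ℕ) - (d - s), h2⟩ else 0) else 0 := by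
        intro t ht
        rw [affSmul_apply, muF_vtx d s Vf hs hv hT ht]
        by_cases hc1 : T = fib d s Vf hs (preV d s v)
        · by_cases hc2 : t = sufV d s hs v
          · rw [if_pos ⟨hc1, hc2⟩, if_pos hc1, if_pos hc2, mul_one]
          · rw [if_neg (fun hc => hc2 hc.2), if_pos hc1, if_neg hc2, mul_zero]
        · rw [if_neg (fun hc => hc1 hc.1), if_neg hc1, mul_zero]
      rw [Finset.sum_congr rfl e2]
      by_cases hc1 : T = fib d s Vf hs (preV d s v)
      · simp only [if_pos hc1]
        rw [Finset.sum_ite_eq' _ (sufV d s hs v) (fun t => t ⟨(j : ℕ) - (d - s), h2⟩),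
          if_pos (by rw [hc1]; exact suf_mem_fib d s Vf hs hv)]
      · simp only [if_neg hc1, Finset.sum_const_zero]
    rw [Finset.sum_congr rfl e1,
      Finset.sum_ite_eq' _ (fib d s Vf hs (preV d s v))
        (fun _ => sufV d s hs v ⟨(j : ℕ) - (d - s), h2⟩),
      if_pos (fib_mem_fams d s Vf hs (pre_mem d s Vf hv))]
    exact sufV_coord d s hs v j h h2

lemma Kset_convex : Convex ℝ (Kset d s Vf hs) := by
  have : Kset d s Vf hs = ⋂ i, (ineqF d s Vf hs i) ⁻¹' (Set.Ici 0) := by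
    ext x
    simp [Kset, Set.mem_iInter]
  rw [this]
  exact convex_iInter fun i => (convex_Ici (0 : ℝ)).affine_preimage _

lemma hull_subset_image :
    convexHull ℝ (Vf : Set (Euc d)) ⊆ phiMap d s Vf hs '' Kset d s Vf hs := by
  refine convexHull_min ?_ ((Kset_convex d s Vf hs).affine_image _)
  intro v hv
  exact ⟨vtxPt d s Vf hs v, vtxPt_mem_Kset d s Vf hs hv, phiMap_vtxPt d s Vf hs hv⟩

lemma hull_eq_image :
    convexHull ℝ (Vf : Set (Euc d)) = phiMap d s Vf hs '' Kset d s Vf hs :=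
  le_antisymm (hull_subset_image d s Vf hs) (image_subset_hull d s Vf hs)


section Counting

variable (hcube : ∀ v ∈ Vf, ∀ i : Fin d, v i = 0 ∨ v i = 1)
include hcube

lemma prefxs_card_le : (prefxs d s Vf).card ≤ 2 ^ (d - s) := by
  have hsub : prefxs d s Vf ⊆ Fintype.piFinset (fun _ : Fin (d - s) => ({0, 1} : Finset ℝ)) := by
    intro p hp
    rw [prefxs, Finset.mem_image] at hp
    obtain ⟨v, hv, rfl⟩ := hp
    rw [Fintype.mem_piFinset]
    intro i
    rcases hcube v hv ⟨i, lt_of_lt_of_le i.2 (Nat.sub_le d s)⟩ with h | h <;>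
      simp [preV, h]
  calc (prefxs d s Vf).card ≤ _ := Finset.card_le_card hsub
    _ = 2 ^ (d - s) := by
        rw [Fintype.card_piFinset]
        simp

lemma fams_sub_powerset :
    fams d s Vf hs ⊆ (Fintype.piFinset (fun _ : Fin s => ({0, 1} : Finset ℝ))).powerset := by
  intro T hT
  rw [Finset.mem_powerset]
  rw [fams, Finset.mem_image] at hT
  obtain ⟨p, _, rfl⟩ := hT
  intro t ht
  rw [fib, Finset.mem_image] at ht
  obtain ⟨v, hv, rfl⟩ := ht
  rw [Fintype.mem_piFinset]
  intro i
  rcases hcube v (mem_filter.1 hv).1 ⟨d - s + i, by have := i.2; omega⟩ with h | h <;>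
    simp [sufV, h]

lemma fams_card_le : (fams d s Vf hs).card ≤ 2 ^ (2 ^ s) := by
  calc (fams d s Vf hs).card
      ≤ _ := Finset.card_le_card (fams_sub_powerset d s Vf hs hcube)
    _ = 2 ^ (2 ^ s) := by
        rw [Finset.card_powerset, Fintype.card_piFinset]
        simp

lemma mem_fams_card_le {T : Finset (Fin s → ℝ)} (hT : T ∈ fams d s Vf hs) :
    T.card ≤ 2 ^ s := by
  have := Finset.mem_powerset.1 (fams_sub_powerset d s Vf hs hcube hT)
  calc T.card ≤ _ := Finset.card_le_card this
    _ = 2 ^ s := by rw [Fintype.card_piFinset]; simp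

lemma card_IneqIdx_le :
    Fintype.card (IneqIdx d s Vf hs) ≤ 2 ^ (d - s) + 2 ^ (2 ^ s) * (2 ^ s + 1) := by
  have e1 : Fintype.card (IneqIdx d s Vf hs)
      = (prefxs d s Vf).card + (2 + ∑ T ∈ fams d s Vf hs, T.card) := by
    simp only [IneqIdx, Fintype.card_sum, Fintype.card_coe, Fintype.card_bool,
      Fintype.card_sigma]
    congr 1
    congr 1
    rw [← Finset.sum_coe_sort (fams d s Vf hs) (fun T => T.card)]
  have h1 := prefxs_card_le d s Vf hcube
  have h2 : ∑ T ∈ fams d s Vf hs, T.card ≤ 2 ^ (2 ^ s) * 2 ^ s := by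
    calc ∑ T ∈ fams d s Vf hs, T.card
        ≤ ∑ _T ∈ fams d s Vf hs, 2 ^ s :=
          Finset.sum_le_sum fun T hT => mem_fams_card_le d s Vf hs hcube hT
      _ = (fams d s Vf hs).card * 2 ^ s := by rw [Finset.sum_const, smul_eq_mul]
      _ ≤ 2 ^ (2 ^ s) * 2 ^ s :=
          Nat.mul_le_mul_right _ (fams_card_le d s Vf hs hcube)
  have h3 : 2 ≤ 2 ^ (2 ^ s) := by
    calc 2 = 2 ^ 1 := (pow_one 2).symm
      _ ≤ 2 ^ (2 ^ s) := Nat.pow_le_pow_right (by norm_num) Nat.one_le_two_pow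
  have h4 : 2 ^ (2 ^ s) * (2 ^ s + 1) = 2 ^ (2 ^ s) * 2 ^ s + 2 ^ (2 ^ s) := by ring
  omega

end Counting

end Constr

lemma hasLinExt_of_card_le {d : ℕ} {P : Set (Euc d)} {ι : Type} [Fintype ι] {n : ℕ}
    (φ : Euc n →ᵃ[ℝ] Euc d) (a : ι → (Euc n →ᵃ[ℝ] ℝ))
    (hP : P = φ '' {x | ∀ i, 0 ≤ a i x}) {L : ℕ} (hL : Fintype.card ι ≤ L) :
    HasLinExt P L := by
  have f : ι ↪ Fin L :=
    (Fintype.equivFin ι).toEmbedding.trans (Fin.castLEEmb hL)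
  set b : Fin L → (Euc n →ᵃ[ℝ] ℝ) :=
    fun j => if h : ∃ i, f i = j then a h.choose else 0 with hb
  have hset : {x : Euc n | ∀ j, 0 ≤ b j x} = {x | ∀ i, 0 ≤ a i x} := by
    ext x
    simp only [Set.mem_setOf_eq]
    constructor
    · intro hx i
      have h1 : ∃ i', f i' = f i := ⟨i, rfl⟩
      have h2 := hx (f i)
      rw [hb] at h2
      simp only [dif_pos h1] at h2
      rwa [f.injective h1.choose_spec] at h2
    · intro hx j
      rw [hb]
      by_cases h : ∃ i, f i = j
      · simp only [dif_pos h]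
        exact hx _
      · simp only [dif_neg h]
        rw [show ((0 : Euc n →ᵃ[ℝ] ℝ)) x = 0 from rfl]
  exact ⟨n, φ, b, by rw [hP, hset]⟩

lemma main_construction (d s : ℕ) (hs : s ≤ d) (Vf : Finset (Euc d))
    (hcube : ∀ v ∈ Vf, ∀ i : Fin d, v i = 0 ∨ v i = 1) :
    HasLinExt (convexHull ℝ (Vf : Set (Euc d))) (2 ^ (d - s) + 2 ^ (2 ^ s) * (2 ^ s + 1)) :=
  hasLinExt_of_card_le (phiMap d s Vf hs) (ineqF d s Vf hs)
    (hull_eq_image d s Vf hs) (card_IneqIdx_le d s Vf hs hcube)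

theorem statement19 (d s : ℕ) (hs : s ≤ d) (P : Set (EuclideanSpace ℝ (Fin d)))
    (hP : IsZeroOnePolytope P) :
    xc P ≤ 2 ^ (d - s) + 2 ^ (2 ^ s) * (2 ^ s + 1) := by
  rw [xc]
  split_ifs with h
  · exact Nat.zero_le _
  · obtain ⟨V, hVsub, rfl⟩ := hP
    have hfin : V.Finite := by
      have h1 : Set.Finite {f : Fin d → ℝ | ∀ i, f i = 0 ∨ f i = 1} := by
        refine (Set.Finite.pi fun _ : Fin d =>
          (Set.finite_singleton (1 : ℝ)).insert 0).subset ?_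
        intro f hf
        rw [Set.mem_pi]
        intro i _
        rcases hf i with h | h <;> simp [h]
      exact (show Set.Finite {x : EuclideanSpace ℝ (Fin d) | ∀ i, x i = 0 ∨ x i = 1}
        from h1.preimage (WithLp.equiv 2 (Fin d → ℝ)).injective.injOn).subset hVsub
    have hcoe : (hfin.toFinset : Set (EuclideanSpace ℝ (Fin d))) = V :=
      Set.Finite.coe_toFinset hfin
    have hmain := main_construction d s hs hfin.toFinset
      (fun v hv i => hVsub (hfin.mem_toFinset.1 hv) i)
    rw [hcoe] at hmain
    exact Nat.sInf_le hmain
end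
end
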